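/- arXiv:1402.3573 — 7 statements merged into one kernel-verified Lean document; each statement's English description precedes it below -/
import Mathlib

section
/- If a finite simple graph G admits a tree 3-spanner T having a 5-center {u,v}, then G admits a uv-concentrated tree 3-spanner, i.e., a tree 3-spanner T' with 5-center {u,v} such that every G-neighbor of u that is strictly closer in T' to u than to v is a T'-neighbor of u, and every G-neighbor of v that is strictly closer in T' to v than to u is a T'-neighbor of v. -/
open SimpleGraph

section aux
variable {V : Type*} {G : SimpleGraph V}

lemma tree_path_length (hG : G.IsAcyclic) {x y : V} (p : G.Walk x y) (hp : p.IsPath) :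
    G.dist x y = p.length := by
  obtain ⟨q, hq, hql⟩ := (Reachable.exists_path_of_dist ⟨p⟩)
  have h := hG.path_unique ⟨p, hp⟩ ⟨q, hq⟩
  have : p = q := congrArg Subtype.val h
  rw [this]; omega

lemma adj_dist_le' {a b : V} (h : G.Adj a b) : G.dist a b ≤ 1 := by
  have := SimpleGraph.dist_le (SimpleGraph.Walk.cons h SimpleGraph.Walk.nil)
  simpa using this

lemma tree_adj_dist (hT : G.IsTree) {a b : V} (hab : G.Adj a b) (x : V) :
    G.dist x b = G.dist x a + 1 ∨ G.dist x a = G.dist x b + 1 := by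
  classical
  obtain ⟨p, hp, hl⟩ := hT.isConnected.exists_path_of_dist x a
  by_cases hb : b ∈ p.support
  · right
    have h1 : G.dist x b = (p.takeUntil b hb).length :=
      tree_path_length hT.IsAcyclic _ (hp.takeUntil hb)
    have h2 : G.dist b a = (p.dropUntil b hb).length :=
      tree_path_length hT.IsAcyclic _ (hp.dropUntil hb)
    have h3 : G.dist b a = 1 := dist_eq_one_iff_adj.mpr hab.symm
    have h4 : (p.takeUntil b hb).length + (p.dropUntil b hb).length = p.length := by
      rw [← SimpleGraph.Walk.length_append, SimpleGraph.Walk.take_spec]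
    omega
  · left
    have hp' : (SimpleGraph.Walk.cons hab.symm p.reverse).IsPath := by
      refine hp.reverse.cons ?_
      simpa using hb
    have h1 : G.dist b x = (SimpleGraph.Walk.cons hab.symm p.reverse).length :=
      tree_path_length hT.IsAcyclic _ hp'
    simp [SimpleGraph.Walk.length_cons] at h1
    rw [dist_comm] at h1
    omega

lemma exists_mid {x y : V} (h : G.dist x y = 2) : ∃ z, G.Adj x z ∧ G.Adj z y := by
  obtain ⟨p, hl⟩ := exists_walk_of_dist_ne_zero (G := G) (u := x) (v := y) (by omega)
  rw [h] at hl
  cases p with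
  | nil => simp at hl
  | cons h1 p1 =>
    cases p1 with
    | nil => simp at hl
    | cons h2 p2 =>
      simp [SimpleGraph.Walk.length_cons] at hl
      have := SimpleGraph.Walk.eq_of_length_eq_zero (p := p2) (by simpa using hl)
      subst this
      exact ⟨_, h1, h2⟩

lemma walk_cross {S : Set V} {x y : V} (w : G.Walk x y) (hx : x ∈ S) (hy : y ∉ S) :
    ∃ a b, G.Adj a b ∧ a ∈ S ∧ b ∉ S ∧ s(a, b) ∈ w.edges := by
  induction w with
  | nil => exact absurd hx hy
  | @cons c d e h p ih =>
    by_cases hm : d ∈ S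
    · obtain ⟨a, b, h1, h2, h3, h4⟩ := ih hm hy
      exact ⟨a, b, h1, h2, h3, by simp [h4]⟩
    · exact ⟨c, d, h, hx, hm, by simp⟩

lemma four_path (hT : G.IsTree) {u x y z1 z2 : V}
    (h1 : G.Adj u z1) (h2 : G.Adj z1 x) (h3 : G.Adj u z2) (h4 : G.Adj z2 y)
    (hz : z1 ≠ z2) (hxy : x ≠ y) (hx : G.dist u x = 2) (hy : G.dist u y = 2) :
    G.dist x y = 4 := by
  have hxu : x ≠ u := by rintro rfl; simp [SimpleGraph.dist_self] at hx
  have hyu : y ≠ u := by rintro rfl; simp [SimpleGraph.dist_self] at hy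
  have hxz2 : x ≠ z2 := by rintro rfl; have := adj_dist_le' h3; omega
  have hyz1 : z1 ≠ y := by rintro rfl; have := adj_dist_le' h1; omega
  have hcalc := tree_path_length hT.IsAcyclic
    (.cons h2.symm (.cons h1.symm (.cons h3 (.cons h4 .nil))))
    (by simp [SimpleGraph.Walk.cons_isPath_iff]
        exact ⟨⟨⟨h4.ne, h3.ne, Ne.symm hyu⟩, h1.ne', hz, hyz1⟩, h2.ne', hxu, hxz2, hxy⟩)
  simpa using hcalc

/-- deep u-side vertex `x` (with mid `z`) vs `y` adjacent to `v`. -/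
lemma four_path' (hT : G.IsTree) {u v x y z : V} (huv : G.Adj u v)
    (h1 : G.Adj u z) (h2 : G.Adj z x) (hx2 : G.dist u x = 2) (hx3 : G.dist v x = 3)
    (hy : G.Adj v y) (hyu : y ≠ u) :
    G.dist x y = 4 := by
  have htri := hT.isConnected.dist_triangle (u := v) (v := z) (w := x)
  have hxu : x ≠ u := by rintro rfl; simp [SimpleGraph.dist_self] at hx2
  have hxv : x ≠ v := by rintro rfl; simp [SimpleGraph.dist_self] at hx3
  have hxy : x ≠ y := by rintro rfl; have := adj_dist_le' hy; omega
  have hzv : z ≠ v := by rintro rfl; have := adj_dist_le' h2; omega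
  have hzy : z ≠ y := by
    rintro rfl
    have d1 := adj_dist_le' (hy.symm : G.Adj z v)
    have d2 := adj_dist_le' h2
    rw [SimpleGraph.dist_comm] at d1
    omega
  have hcalc := tree_path_length hT.IsAcyclic
    (.cons h2.symm (.cons h1.symm (.cons huv (.cons hy .nil))))
    (by simp [SimpleGraph.Walk.cons_isPath_iff]
        exact ⟨⟨⟨hy.ne, huv.ne, Ne.symm hyu⟩, h1.ne', hzv, hzy⟩, h2.ne', hxu, hxv, hxy⟩)
  simpa using hcalc

/-- deep u-side vertex `x` (with mid `z1`) vs deep v-side vertex `y` (with mid `z2`). -/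
lemma five_path (hT : G.IsTree) {u v x y z1 z2 : V} (huv : G.Adj u v)
    (h1 : G.Adj u z1) (h2 : G.Adj z1 x) (hx2 : G.dist u x = 2) (hx3 : G.dist v x = 3)
    (h3 : G.Adj v z2) (h4 : G.Adj z2 y) (hy2 : G.dist v y = 2) (hy3 : G.dist u y = 3) :
    G.dist x y = 5 := by
  have htri := hT.isConnected.dist_triangle (u := v) (v := z1) (w := x)
  have hxu : x ≠ u := by rintro rfl; simp [SimpleGraph.dist_self] at hx2
  have hxv : x ≠ v := by rintro rfl; simp [SimpleGraph.dist_self] at hx3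
  have hyu : y ≠ u := by rintro rfl; simp [SimpleGraph.dist_self] at hy3
  have hyv : y ≠ v := by rintro rfl; simp [SimpleGraph.dist_self] at hy2
  have hxz2 : x ≠ z2 := by rintro rfl; have := adj_dist_le' h3; omega
  have hxy : x ≠ y := by rintro rfl; omega
  have hz1v : z1 ≠ v := by rintro rfl; have := adj_dist_le' h2; omega
  have hz1z2 : z1 ≠ z2 := by
    rintro rfl
    have d1 := adj_dist_le' h3
    have d2 := adj_dist_le' h2
    omega
  have hz1y : z1 ≠ y := by
    rintro rfl
    have d1 := adj_dist_le' h1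
    omega
  have huz2 : u ≠ z2 := by
    rintro rfl
    have d1 := adj_dist_le' h4
    omega
  have hcalc := tree_path_length hT.IsAcyclic
    (.cons h2.symm (.cons h1.symm (.cons huv (.cons h3 (.cons h4 .nil)))))
    (by simp [SimpleGraph.Walk.cons_isPath_iff]
        exact ⟨⟨⟨⟨h4.ne, h3.ne, Ne.symm hyv⟩, huv.ne, huz2, Ne.symm hyu⟩,
          h1.ne', hz1v, hz1z2, hz1y⟩, h2.ne', hxu, hxv, hxz2, hxy⟩)
  simpa using hcalc

end aux

/-- If `G` admits a tree 3-spanner with 5-center `{u,v}`, then `G` admits a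
`uv`-concentrated tree 3-spanner. -/
theorem stmt_4 {V : Type*} [Fintype V] (G T : SimpleGraph V) (u v : V)
    (hle : T ≤ G) (hT : T.IsTree)
    (hspan : ∀ x y : V, T.dist x y ≤ 3 * G.dist x y)
    (hadj : T.Adj u v)
    (hcenter : ∀ w : V, T.dist u w ≤ 2 ∨ T.dist v w ≤ 2) :
    ∃ T' : SimpleGraph V, T' ≤ G ∧ T'.IsTree ∧
      (∀ x y : V, T'.dist x y ≤ 3 * G.dist x y) ∧
      T'.Adj u v ∧ (∀ w : V, T'.dist u w ≤ 2 ∨ T'.dist v w ≤ 2) ∧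
      (∀ w : V, G.Adj u w → T'.dist w u < T'.dist w v → T'.Adj u w) ∧
      (∀ w : V, G.Adj v w → T'.dist w v < T'.dist w u → T'.Adj v w) := by
  classical
  have hTc := hT.isConnected
  have hTa := hT.IsAcyclic
  have hne : u ≠ v := hadj.ne
  have duv : T.dist u v = 1 := dist_eq_one_iff_adj.mpr hadj
  have dvu : T.dist v u = 1 := by rw [SimpleGraph.dist_comm]; exact duv
  have hz0 : ∀ a b : V, T.dist a b = 0 → a = b := fun a b h => (hTc.dist_eq_zero_iff).mp h
  -- the six classes
  have cls : ∀ x : V, (x = u) ∨ (x = v) ∨ (T.dist u x = 1 ∧ T.dist v x = 2) ∨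
      (T.dist v x = 1 ∧ T.dist u x = 2) ∨ (T.dist u x = 2 ∧ T.dist v x = 3) ∨
      (T.dist v x = 2 ∧ T.dist u x = 3) := by
    intro x
    by_cases hxu : x = u
    · exact Or.inl hxu
    by_cases hxv : x = v
    · exact Or.inr (Or.inl hxv)
    have h1 : T.dist u x ≠ 0 := fun h => hxu (hz0 u x h).symm
    have h2 : T.dist v x ≠ 0 := fun h => hxv (hz0 v x h).symm
    have hs : T.dist x v = T.dist x u + 1 ∨ T.dist x u = T.dist x v + 1 :=
      tree_adj_dist hT hadj x
    rw [SimpleGraph.dist_comm (u := x) (v := v), SimpleGraph.dist_comm (u := x) (v := u)] at hs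
    have hc := hcenter x
    right; right
    omega
  -- parent function
  have pex : ∀ x : V, ∃ z : V,
      (x = u ∧ z = u) ∨ (x = v ∧ z = u) ∨
      (T.dist u x = 1 ∧ T.dist v x = 2 ∧ z = u) ∨
      (T.dist v x = 1 ∧ T.dist u x = 2 ∧ z = v) ∨
      (T.dist u x = 2 ∧ T.dist v x = 3 ∧
        ((G.Adj u x ∧ z = u) ∨ (¬G.Adj u x ∧ T.Adj u z ∧ T.Adj z x))) ∨
      (T.dist v x = 2 ∧ T.dist u x = 3 ∧
        ((G.Adj v x ∧ z = v) ∨ (¬G.Adj v x ∧ T.Adj v z ∧ T.Adj z x))) := by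
    intro x
    rcases cls x with h | h | ⟨h1, h2⟩ | ⟨h1, h2⟩ | ⟨h1, h2⟩ | ⟨h1, h2⟩
    · exact ⟨u, Or.inl ⟨h, rfl⟩⟩
    · exact ⟨u, Or.inr (Or.inl ⟨h, rfl⟩)⟩
    · exact ⟨u, Or.inr (Or.inr (Or.inl ⟨h1, h2, rfl⟩))⟩
    · exact ⟨v, Or.inr (Or.inr (Or.inr (Or.inl ⟨h1, h2, rfl⟩)))⟩
    · by_cases hb : G.Adj u x
      · exact ⟨u, Or.inr (Or.inr (Or.inr (Or.inr (Or.inl ⟨h1, h2, Or.inl ⟨hb, rfl⟩⟩))))⟩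
      · obtain ⟨z, hz1, hz2⟩ := exists_mid h1
        exact ⟨z, Or.inr (Or.inr (Or.inr (Or.inr (Or.inl ⟨h1, h2, Or.inr ⟨hb, hz1, hz2⟩⟩))))⟩
    · by_cases hb : G.Adj v x
      · exact ⟨v, Or.inr (Or.inr (Or.inr (Or.inr (Or.inr ⟨h1, h2, Or.inl ⟨hb, rfl⟩⟩))))⟩
      · obtain ⟨z, hz1, hz2⟩ := exists_mid h1
        exact ⟨z, Or.inr (Or.inr (Or.inr (Or.inr (Or.inr ⟨h1, h2, Or.inr ⟨hb, hz1, hz2⟩⟩))))⟩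
  choose p hp using pex
  have nz : ∀ a b : V, T.dist a b ≠ 0 → a ≠ b := by
    intro a b h he
    exact h (by rw [he, SimpleGraph.dist_self])
  have hpu : p u = u := by
    rcases hp u with ⟨_, hz⟩ | ⟨he, _⟩ | ⟨d1, d2, _⟩ | ⟨d1, d2, _⟩ | ⟨d1, d2, _⟩ | ⟨d1, d2, _⟩
    · exact hz
    · exact absurd he hne
    · rw [SimpleGraph.dist_self] at d1; omega
    · rw [SimpleGraph.dist_self] at d2; omega
    · rw [SimpleGraph.dist_self] at d1; omega
    · rw [SimpleGraph.dist_self] at d2; omega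
  have hpv : p v = u := by
    rcases hp v with ⟨he, _⟩ | ⟨_, hz⟩ | ⟨d1, d2, _⟩ | ⟨d1, d2, _⟩ | ⟨d1, d2, _⟩ | ⟨d1, d2, _⟩
    · exact absurd he.symm hne
    · exact hz
    · rw [SimpleGraph.dist_self] at d2; omega
    · rw [SimpleGraph.dist_self] at d1; omega
    · rw [SimpleGraph.dist_self] at d2; omega
    · rw [SimpleGraph.dist_self] at d1; omega
  have hc3 : ∀ x, T.dist u x = 1 → T.dist v x = 2 → p x = u := by
    intro x h1 h2
    rcases hp x with ⟨he, hz⟩ | ⟨he, hz⟩ | ⟨_, _, hz⟩ | ⟨d1, d2, hz⟩ | ⟨d1, d2, _⟩ | ⟨d1, d2, _⟩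
    · subst he; rw [SimpleGraph.dist_self] at h1; omega
    · subst he; rw [SimpleGraph.dist_self] at h2; omega
    · exact hz
    · omega
    · omega
    · omega
  have hc4 : ∀ x, T.dist v x = 1 → T.dist u x = 2 → p x = v := by
    intro x h1 h2
    rcases hp x with ⟨he, hz⟩ | ⟨he, hz⟩ | ⟨d1, d2, hz⟩ | ⟨_, _, hz⟩ | ⟨d1, d2, _⟩ | ⟨d1, d2, _⟩
    · subst he; rw [SimpleGraph.dist_self] at h2; omega
    · subst he; rw [SimpleGraph.dist_self] at h1; omega
    · omega
    · exact hz
    · omega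
    · omega
  have hc5b : ∀ x, T.dist u x = 2 → T.dist v x = 3 → G.Adj u x → p x = u := by
    intro x h1 h2 hb
    rcases hp x with ⟨he, hz⟩ | ⟨he, hz⟩ | ⟨d1, d2, hz⟩ | ⟨d1, d2, hz⟩ | ⟨_, _, hor⟩ | ⟨d1, d2, _⟩
    · subst he; rw [SimpleGraph.dist_self] at h1; omega
    · subst he; rw [SimpleGraph.dist_self] at h2; omega
    · omega
    · omega
    · rcases hor with ⟨_, hz⟩ | ⟨hnb, _, _⟩
      · exact hz
      · exact absurd hb hnb
    · omega
  have hc5n : ∀ x, T.dist u x = 2 → T.dist v x = 3 → ¬G.Adj u x →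
      T.Adj u (p x) ∧ T.Adj (p x) x := by
    intro x h1 h2 hb
    rcases hp x with ⟨he, hz⟩ | ⟨he, hz⟩ | ⟨d1, d2, hz⟩ | ⟨d1, d2, hz⟩ | ⟨_, _, hor⟩ | ⟨d1, d2, _⟩
    · subst he; rw [SimpleGraph.dist_self] at h1; omega
    · subst he; rw [SimpleGraph.dist_self] at h2; omega
    · omega
    · omega
    · rcases hor with ⟨hb', _⟩ | ⟨_, hz1, hz2⟩
      · exact absurd hb' hb
      · exact ⟨hz1, hz2⟩
    · omega
  have hc6b : ∀ x, T.dist v x = 2 → T.dist u x = 3 → G.Adj v x → p x = v := by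
    intro x h1 h2 hb
    rcases hp x with ⟨he, hz⟩ | ⟨he, hz⟩ | ⟨d1, d2, hz⟩ | ⟨d1, d2, hz⟩ | ⟨d1, d2, _⟩ | ⟨_, _, hor⟩
    · subst he; rw [SimpleGraph.dist_self] at h2; omega
    · subst he; rw [SimpleGraph.dist_self] at h1; omega
    · omega
    · omega
    · omega
    · rcases hor with ⟨_, hz⟩ | ⟨hnb, _, _⟩
      · exact hz
      · exact absurd hb hnb
  have hc6n : ∀ x, T.dist v x = 2 → T.dist u x = 3 → ¬G.Adj v x →
      T.Adj v (p x) ∧ T.Adj (p x) x := by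
    intro x h1 h2 hb
    rcases hp x with ⟨he, hz⟩ | ⟨he, hz⟩ | ⟨d1, d2, hz⟩ | ⟨d1, d2, hz⟩ | ⟨d1, d2, _⟩ | ⟨_, _, hor⟩
    · subst he; rw [SimpleGraph.dist_self] at h2; omega
    · subst he; rw [SimpleGraph.dist_self] at h1; omega
    · omega
    · omega
    · omega
    · rcases hor with ⟨hb', _⟩ | ⟨_, hz1, hz2⟩
      · exact absurd hb' hb
      · exact ⟨hz1, hz2⟩
  -- the new tree
  set T' : SimpleGraph V := SimpleGraph.fromRel (fun a b => a ≠ u ∧ p a = b) with hT'def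
  have adj_iff : ∀ a b, T'.Adj a b ↔ a ≠ b ∧ ((a ≠ u ∧ p a = b) ∨ (b ≠ u ∧ p b = a)) := by
    intro a b
    rw [hT'def]
    exact SimpleGraph.fromRel_adj _ a b
  have hnepx : ∀ x, x ≠ u → p x ≠ x := by
    intro x hxu
    rcases hp x with ⟨he, _⟩ | ⟨he, hz⟩ | ⟨d1, d2, hz⟩ | ⟨d1, d2, hz⟩ | ⟨d1, d2, hor⟩ |
      ⟨d1, d2, hor⟩
    · exact absurd he hxu
    · rw [hz, he]; exact hne
    · rw [hz]; exact (nz u x (by omega)).symm ∘ Eq.symm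
    · rw [hz]; exact (nz v x (by omega)).symm ∘ Eq.symm
    · rcases hor with ⟨_, hz⟩ | ⟨_, _, hz2⟩
      · rw [hz]; exact (nz u x (by omega)).symm ∘ Eq.symm
      · exact hz2.ne
    · rcases hor with ⟨_, hz⟩ | ⟨_, _, hz2⟩
      · rw [hz]; exact (nz v x (by omega)).symm ∘ Eq.symm
      · exact hz2.ne
  have hPE : ∀ x, x ≠ u → T'.Adj (p x) x := by
    intro x hxu
    exact (adj_iff _ _).mpr ⟨hnepx x hxu, Or.inr ⟨hxu, rfl⟩⟩
  have T'uv : T'.Adj u v := by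
    have h := hPE v (Ne.symm hne)
    rwa [hpv] at h
  -- mid-structure for deep nonbad vertices
  have hmidu : ∀ x, T.dist u x = 2 → T.dist v x = 3 → ¬G.Adj u x →
      T.dist u (p x) = 1 ∧ T.dist v (p x) = 2 ∧ T'.Adj u (p x) ∧ T'.Adj (p x) x := by
    intro x h1 h2 hb
    obtain ⟨hz1, hz2⟩ := hc5n x h1 h2 hb
    have e1 : T.dist u (p x) = 1 := dist_eq_one_iff_adj.mpr hz1
    have e2 : T.dist v (p x) = 2 := by
      have hs := tree_adj_dist hT hadj (p x)
      rw [SimpleGraph.dist_comm (u := p x) (v := v),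
        SimpleGraph.dist_comm (u := p x) (v := u)] at hs
      have hzv : v ≠ p x := by
        intro he
        have : T.dist v x ≤ 1 := by rw [he]; exact adj_dist_le' hz2
        omega
      have : T.dist v (p x) ≠ 0 := fun h => hzv (hz0 v (p x) h)
      omega
    have e3 : p (p x) = u := hc3 (p x) e1 e2
    have e4 : T'.Adj u (p x) := by
      have h := hPE (p x) (nz u (p x) (by omega)).symm
      rwa [e3] at h
    exact ⟨e1, e2, e4, hPE x (nz u x (by omega)).symm⟩
  have hmidv : ∀ x, T.dist v x = 2 → T.dist u x = 3 → ¬G.Adj v x →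
      T.dist v (p x) = 1 ∧ T.dist u (p x) = 2 ∧ T'.Adj v (p x) ∧ T'.Adj (p x) x := by
    intro x h1 h2 hb
    obtain ⟨hz1, hz2⟩ := hc6n x h1 h2 hb
    have e1 : T.dist v (p x) = 1 := dist_eq_one_iff_adj.mpr hz1
    have e2 : T.dist u (p x) = 2 := by
      have hs := tree_adj_dist hT hadj (p x)
      rw [SimpleGraph.dist_comm (u := p x) (v := v),
        SimpleGraph.dist_comm (u := p x) (v := u)] at hs
      have hzu : u ≠ p x := by
        intro he
        have : T.dist u x ≤ 1 := by rw [he]; exact adj_dist_le' hz2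
        omega
      have : T.dist u (p x) ≠ 0 := fun h => hzu (hz0 u (p x) h)
      omega
    have e3 : p (p x) = v := hc4 (p x) e1 e2
    have e4 : T'.Adj v (p x) := by
      have h := hPE (p x) (nz u (p x) (by omega)).symm
      rwa [e3] at h
    exact ⟨e1, e2, e4, hPE x (nz u x (by omega)).symm⟩
  -- adjacency of class-1/2 vertices
  have b3 : ∀ x, T.dist u x = 1 → T.dist v x = 2 → T'.Adj u x := by
    intro x h1 h2
    have h := hPE x (nz u x (by omega)).symm
    rwa [hc3 x h1 h2] at h
  have b4 : ∀ x, T.dist v x = 1 → T.dist u x = 2 → T'.Adj v x := by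
    intro x h1 h2
    have h := hPE x (nz u x (by omega)).symm
    rwa [hc4 x h1 h2] at h
  have b5b : ∀ x, T.dist u x = 2 → T.dist v x = 3 → G.Adj u x → T'.Adj u x := by
    intro x h1 h2 hb
    have h := hPE x (nz u x (by omega)).symm
    rwa [hc5b x h1 h2 hb] at h
  have b6b : ∀ x, T.dist v x = 2 → T.dist u x = 3 → G.Adj v x → T'.Adj v x := by
    intro x h1 h2 hb
    have h := hPE x (nz u x (by omega)).symm
    rwa [hc6b x h1 h2 hb] at h
  -- reachability and connectivity
  have hreach : ∀ x, T'.Reachable u x := by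
    intro x
    rcases cls x with he | he | ⟨h1, h2⟩ | ⟨h1, h2⟩ | ⟨h1, h2⟩ | ⟨h1, h2⟩
    · rw [he]
    · rw [he]; exact T'uv.reachable
    · exact (b3 x h1 h2).reachable
    · exact T'uv.reachable.trans (b4 x h1 h2).reachable
    · by_cases hb : G.Adj u x
      · exact (b5b x h1 h2 hb).reachable
      · obtain ⟨_, _, e4, e5⟩ := hmidu x h1 h2 hb
        exact e4.reachable.trans e5.reachable
    · by_cases hb : G.Adj v x
      · exact T'uv.reachable.trans (b6b x h1 h2 hb).reachable
      · obtain ⟨_, _, e4, e5⟩ := hmidv x h1 h2 hb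
        exact T'uv.reachable.trans (e4.reachable.trans e5.reachable)
  have T'conn : T'.Connected := by
    rw [SimpleGraph.connected_iff]
    exact ⟨fun a b => (hreach a).symm.trans (hreach b), ⟨u⟩⟩
  -- rank function
  set r : V → ℕ := fun z =>
    if z = u then 0 else if z = v then 1 else if T.dist u z = 1 then 1
    else if T.dist v z = 1 then 2 else if T.dist u z = 2 then (if G.Adj u z then 1 else 2)
    else if G.Adj v z then 2 else 3 with hrdef
  have hr0 : ∀ z, r z = 0 → z = u := by
    intro z h
    rw [hrdef] at h
    simp only at h
    split_ifs at h <;> first | assumption | omega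
  have hr3 : ∀ z, r z ≤ 3 := by
    intro z
    rw [hrdef]
    simp only
    split_ifs <;> omega
  have ru : r u = 0 := by simp [hrdef]
  have rv : r v = 1 := by simp [hrdef, Ne.symm hne]
  have r3 : ∀ z, T.dist u z = 1 → T.dist v z = 2 → r z = 1 := by
    intro z h1 h2
    have n1 : ¬z = u := (nz u z (by omega)).symm
    have n2 : ¬z = v := (nz v z (by omega)).symm
    have a1 : T.Adj u z := dist_eq_one_iff_adj.mp h1
    have a2 : ¬T.Adj v z := fun h => by rw [← dist_eq_one_iff_adj] at h; omega
    simp [hrdef, n1, n2, h1, h2, a1, a2]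
  have r4 : ∀ z, T.dist v z = 1 → T.dist u z = 2 → r z = 2 := by
    intro z h1 h2
    have n1 : ¬z = u := (nz u z (by omega)).symm
    have n2 : ¬z = v := (nz v z (by omega)).symm
    have a1 : T.Adj v z := dist_eq_one_iff_adj.mp h1
    have a2 : ¬T.Adj u z := fun h => by rw [← dist_eq_one_iff_adj] at h; omega
    simp [hrdef, n1, n2, h1, h2, a1, a2]
  have r5 : ∀ z, T.dist u z = 2 → T.dist v z = 3 → r z = if G.Adj u z then 1 else 2 := by
    intro z h1 h2
    have n1 : ¬z = u := (nz u z (by omega)).symm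
    have n2 : ¬z = v := (nz v z (by omega)).symm
    have a1 : ¬T.Adj u z := fun h => by rw [← dist_eq_one_iff_adj] at h; omega
    have a2 : ¬T.Adj v z := fun h => by rw [← dist_eq_one_iff_adj] at h; omega
    simp [hrdef, n1, n2, h1, h2, a1, a2]
  have r6 : ∀ z, T.dist v z = 2 → T.dist u z = 3 → r z = if G.Adj v z then 2 else 3 := by
    intro z h1 h2
    have n1 : ¬z = u := (nz u z (by omega)).symm
    have n2 : ¬z = v := (nz v z (by omega)).symm
    have a1 : ¬T.Adj u z := fun h => by rw [← dist_eq_one_iff_adj] at h; omega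
    have a2 : ¬T.Adj v z := fun h => by rw [← dist_eq_one_iff_adj] at h; omega
    simp [hrdef, n1, n2, h1, h2, a1, a2]
  have hrp : ∀ z, z ≠ u → r (p z) < r z := by
    intro z hz
    rcases cls z with he | he | ⟨h1, h2⟩ | ⟨h1, h2⟩ | ⟨h1, h2⟩ | ⟨h1, h2⟩
    · exact absurd he hz
    · rw [he, hpv, ru, rv]; omega
    · rw [hc3 z h1 h2, ru, r3 z h1 h2]; omega
    · rw [hc4 z h1 h2, rv, r4 z h1 h2]; omega
    · by_cases hb : G.Adj u z
      · rw [hc5b z h1 h2 hb, ru, r5 z h1 h2, if_pos hb]; omega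
      · obtain ⟨e1, e2, _, _⟩ := hmidu z h1 h2 hb
        rw [r3 (p z) e1 e2, r5 z h1 h2, if_neg hb]; omega
    · by_cases hb : G.Adj v z
      · rw [hc6b z h1 h2 hb, rv, r6 z h1 h2, if_pos hb]; omega
      · obtain ⟨e1, e2, _, _⟩ := hmidv z h1 h2 hb
        rw [r4 (p z) e1 e2, r6 z h1 h2, if_neg hb]; omega
  have hrp' : ∀ z, r (p z) ≤ r z := by
    intro z
    by_cases hz : z = u
    · rw [hz, hpu]
    · exact le_of_lt (hrp z hz)
  -- every edge is a bridge
  have hbridge : ∀ x, x ≠ u → ∀ w : T'.Walk x (p x), s(x, p x) ∈ w.edges := by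
    intro x hxu w
    have hrx : r (p x) < r x := hrp x hxu
    have hxS : x ∈ {z | z = x ∨ p z = x ∨ p (p z) = x} := Or.inl rfl
    have hpxS : p x ∉ {z | z = x ∨ p z = x ∨ p (p z) = x} := by
      intro hmem
      rcases hmem with h | h | h
      · rw [h] at hrx; omega
      · have := hrp' (p x); rw [h] at this; omega
      · have h1 := hrp' (p x)
        have h2 := hrp' (p (p x))
        rw [h] at h2; omega
    obtain ⟨a, b, hab, haS, hbS, hmem⟩ := walk_cross w hxS hpxS
    simp only [Set.mem_setOf_eq] at haS hbS
    rcases (adj_iff a b).mp hab with ⟨hne', ⟨hau, hpa⟩ | ⟨hbu, hpb⟩⟩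
    · rcases haS with h | h | h
      · subst h
        rw [← hpa] at hmem
        exact hmem
      · exact absurd (Or.inl (hpa ▸ h)) hbS
      · exact absurd (Or.inr (Or.inl (hpa ▸ h))) hbS
    · exfalso
      rcases haS with h | h | h
      · exact hbS (Or.inr (Or.inl (hpb.trans h)))
      · exact hbS (Or.inr (Or.inr (by rw [hpb]; exact h)))
      · -- p (p a) = x with a = p b : p (p (p b)) = x, rank contradiction
        have hx3 : p (p (p b)) = x := by rw [hpb]; exact h
        have hrxpos : r x ≠ 0 := fun h0 => hxu (hr0 x h0)
        have e1 : r (p b) < r b := hrp b hbu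
        have hb3 : r b ≤ 3 := hr3 b
        by_cases h1 : p b = u
        · rw [h1, hpu, hpu] at hx3; exact hxu hx3.symm
        by_cases h2 : p (p b) = u
        · rw [h2, hpu] at hx3; exact hxu hx3.symm
        have e2 : r (p (p b)) < r (p b) := hrp _ h1
        have e3 : r (p (p (p b))) < r (p (p b)) := hrp _ h2
        have e4 : r (p (p (p b))) = 0 := by omega
        have : p (p (p b)) = u := hr0 _ e4
        rw [this] at hx3
        exact hxu hx3.symm
  have hac : T'.IsAcyclic := by
    rw [isAcyclic_iff_forall_adj_isBridge]
    intro a b hab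
    rcases (adj_iff a b).mp hab with ⟨hne', ⟨hau, hpa⟩ | ⟨hbu, hpb⟩⟩
    · subst hpa
      rw [isBridge_iff_adj_and_forall_walk_mem_edges]
      exact fun w => hbridge a hau w
    · subst hpb
      rw [Sym2.eq_swap, isBridge_iff_adj_and_forall_walk_mem_edges]
      exact fun w => hbridge b hbu w
  have hT' : T'.IsTree := ⟨T'conn, hac⟩
  -- T' is a subgraph of G
  have hGp : ∀ x, x ≠ u → G.Adj x (p x) := by
    intro x hxu
    rcases hp x with ⟨he, _⟩ | ⟨he, hz⟩ | ⟨d1, _, hz⟩ | ⟨d1, _, hz⟩ | ⟨d1, d2, hor⟩ |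
      ⟨d1, d2, hor⟩
    · exact absurd he hxu
    · rw [hz, he]; exact (hle hadj).symm
    · rw [hz]; exact (hle (dist_eq_one_iff_adj.mp d1)).symm
    · rw [hz]; exact (hle (dist_eq_one_iff_adj.mp d1)).symm
    · rcases hor with ⟨hb, hz⟩ | ⟨_, _, hz2⟩
      · rw [hz]; exact hb.symm
      · exact (hle hz2).symm
    · rcases hor with ⟨hb, hz⟩ | ⟨_, _, hz2⟩
      · rw [hz]; exact hb.symm
      · exact (hle hz2).symm
  have hle' : T' ≤ G := by
    intro a b hab
    rcases (adj_iff a b).mp hab with ⟨hne', ⟨hau, hpa⟩ | ⟨hbu, hpb⟩⟩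
    · have h := hGp a hau
      rwa [hpa] at h
    · have h := hGp b hbu
      rw [hpb] at h
      exact h.symm
  -- distance tools
  have t2 : ∀ (a x y : V), T'.dist x y ≤ T'.dist x a + T'.dist a y :=
    fun a x y => T'conn.dist_triangle
  have dcc : ∀ (a b : V), T'.dist a b = T'.dist b a := fun a b => SimpleGraph.dist_comm
  have d'uv : T'.dist u v = 1 := dist_eq_one_iff_adj.mpr T'uv
  have tvu : T'.dist v u = 1 := (dcc v u).trans d'uv
  have d'self : ∀ a : V, T'.dist a a = 0 := fun a => SimpleGraph.dist_self
  have b5 : ∀ x, T.dist u x = 2 → T.dist v x = 3 → T'.dist u x ≤ 2 := by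
    intro x h1 h2
    by_cases hb : G.Adj u x
    · have := adj_dist_le' (b5b x h1 h2 hb); omega
    · obtain ⟨_, _, e4, e5⟩ := hmidu x h1 h2 hb
      have c1 := t2 (p x) u x
      have c2 := adj_dist_le' e4
      have c3 := adj_dist_le' e5
      omega
  have b6 : ∀ x, T.dist v x = 2 → T.dist u x = 3 → T'.dist v x ≤ 2 := by
    intro x h1 h2
    by_cases hb : G.Adj v x
    · have := adj_dist_le' (b6b x h1 h2 hb); omega
    · obtain ⟨_, _, e4, e5⟩ := hmidv x h1 h2 hb
      have c1 := t2 (p x) v x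
      have c2 := adj_dist_le' e4
      have c3 := adj_dist_le' e5
      omega
  -- the 5-center property
  have hnear : ∀ w, T'.dist u w ≤ 2 ∨ T'.dist v w ≤ 2 := by
    intro w
    rcases cls w with he | he | ⟨h1, h2⟩ | ⟨h1, h2⟩ | ⟨h1, h2⟩ | ⟨h1, h2⟩
    · left; rw [he, d'self]; omega
    · right; rw [he, d'self]; omega
    · left; have := adj_dist_le' (b3 w h1 h2); omega
    · right; have := adj_dist_le' (b4 w h1 h2); omega
    · left; exact b5 w h1 h2
    · right; exact b6 w h1 h2
  -- ball of radius 3 around u and around v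
  have hbu : ∀ z, T'.dist u z ≤ 3 ∧ T'.dist v z ≤ 3 := by
    intro z
    have A := t2 u v z
    have B := t2 v u z
    rcases cls z with he | he | ⟨h1, h2⟩ | ⟨h1, h2⟩ | ⟨h1, h2⟩ | ⟨h1, h2⟩
    · rw [he]; constructor
      · rw [d'self]; omega
      · rw [tvu]; omega
    · rw [he]; constructor
      · rw [d'uv]; omega
      · rw [d'self]; omega
    · have := adj_dist_le' (b3 z h1 h2); omega
    · have := adj_dist_le' (b4 z h1 h2); omega
    · have := b5 z h1 h2; omega
    · have := b6 z h1 h2; omega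
  -- concentration
  have conc_u : ∀ w, G.Adj u w → T'.dist w u < T'.dist w v → T'.Adj u w := by
    intro w hGw hlt
    have hwu : w ≠ u := fun he => by subst he; exact hGw.ne rfl
    have e0 : T'.dist w u ≠ 0 := fun h => hwu (T'conn.dist_eq_zero_iff.mp h)
    by_cases h1 : T'.dist w u = 1
    · exact (dist_eq_one_iff_adj.mp h1).symm
    exfalso
    have c1 := dcc w u
    have c2 := dcc w v
    rcases cls w with he | he | ⟨d1, d2⟩ | ⟨d1, d2⟩ | ⟨d1, d2⟩ | ⟨d1, d2⟩
    · exact hwu he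
    · rw [he] at hlt; have := d'self v; have := tvu; omega
    · have := adj_dist_le' (b3 w d1 d2); omega
    · have := adj_dist_le' (b4 w d1 d2); omega
    · have := adj_dist_le' (b5b w d1 d2 hGw); omega
    · have := b6 w d1 d2; omega
  have conc_v : ∀ w, G.Adj v w → T'.dist w v < T'.dist w u → T'.Adj v w := by
    intro w hGw hlt
    have hwv : w ≠ v := fun he => by subst he; exact hGw.ne rfl
    have e0 : T'.dist w v ≠ 0 := fun h => hwv (T'conn.dist_eq_zero_iff.mp h)
    by_cases h1 : T'.dist w v = 1
    · exact (dist_eq_one_iff_adj.mp h1).symm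
    exfalso
    have c1 := dcc w u
    have c2 := dcc w v
    rcases cls w with he | he | ⟨d1, d2⟩ | ⟨d1, d2⟩ | ⟨d1, d2⟩ | ⟨d1, d2⟩
    · rw [he] at hlt; have := d'self u; have := d'uv; omega
    · exact hwv he
    · have := adj_dist_le' (b3 w d1 d2); omega
    · have := adj_dist_le' (b4 w d1 d2); omega
    · have := b5 w d1 d2; omega
    · have := adj_dist_le' (b6b w d1 d2 hGw); omega
  -- adjacent pairs are at T'-distance at most 3
  have key : ∀ x y, G.Adj x y → T'.dist x y ≤ 3 := by
    intro x y hGxy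
    have hTxy : T.dist x y ≤ 3 := by
      have h1 := hspan x y
      have h2 : G.dist x y = 1 := dist_eq_one_iff_adj.mpr hGxy
      omega
    rcases cls x with he | he | ⟨x1, x2⟩ | ⟨x1, x2⟩ | ⟨x1, x2⟩ | ⟨x1, x2⟩
    · rw [he]; exact (hbu y).1
    · rw [he]; exact (hbu y).2
    · -- x in class 3 (adjacent to u)
      have ax := adj_dist_le' (b3 x x1 x2)
      have cxu := dcc x u
      have A := t2 u x y
      rcases cls y with he | he | ⟨y1, y2⟩ | ⟨y1, y2⟩ | ⟨y1, y2⟩ | ⟨y1, y2⟩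
      · rw [he, dcc x u]; have := (hbu x).1; omega
      · rw [he, dcc x v]; have := (hbu x).2; omega
      · have := adj_dist_le' (b3 y y1 y2); omega
      · have b := adj_dist_le' (b4 y y1 y2)
        have B := t2 v u y
        omega
      · have := b5 y y1 y2; omega
      · by_cases hb : G.Adj v y
        · have b := adj_dist_le' (b6b y y1 y2 hb)
          have B := t2 v u y
          omega
        · exfalso
          obtain ⟨e1, e2⟩ := hc6n y y1 y2 hb
          have h4 := four_path' hT hadj.symm e1 e2 y1 y2 (dist_eq_one_iff_adj.mp x1)
            (nz v x (by omega)).symm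
          rw [SimpleGraph.dist_comm] at h4
          omega
    · -- x in class 4 (adjacent to v)
      have ax := adj_dist_le' (b4 x x1 x2)
      have cxv := dcc x v
      have A := t2 v x y
      rcases cls y with he | he | ⟨y1, y2⟩ | ⟨y1, y2⟩ | ⟨y1, y2⟩ | ⟨y1, y2⟩
      · rw [he, dcc x u]; have := (hbu x).1; omega
      · rw [he, dcc x v]; have := (hbu x).2; omega
      · have b := adj_dist_le' (b3 y y1 y2)
        have B := t2 u v y
        omega
      · have := adj_dist_le' (b4 y y1 y2); omega
      · by_cases hb : G.Adj u y
        · have b := adj_dist_le' (b5b y y1 y2 hb)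
          have B := t2 u v y
          omega
        · exfalso
          obtain ⟨e1, e2⟩ := hc5n y y1 y2 hb
          have h4 := four_path' hT hadj e1 e2 y1 y2 (dist_eq_one_iff_adj.mp x1)
            (nz u x (by omega)).symm
          rw [SimpleGraph.dist_comm] at h4
          omega
      · have := b6 y y1 y2; omega
    · -- x in class 5 (deep on u side)
      have ax := b5 x x1 x2
      have cxu := dcc x u
      have A := t2 u x y
      rcases cls y with he | he | ⟨y1, y2⟩ | ⟨y1, y2⟩ | ⟨y1, y2⟩ | ⟨y1, y2⟩
      · rw [he, dcc x u]; have := (hbu x).1; omega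
      · rw [he, dcc x v]; have := (hbu x).2; omega
      · have := adj_dist_le' (b3 y y1 y2); omega
      · by_cases hb : G.Adj u x
        · have b := adj_dist_le' (b4 y y1 y2)
          have a' := adj_dist_le' (b5b x x1 x2 hb)
          have B := t2 v u y
          omega
        · exfalso
          obtain ⟨e1, e2⟩ := hc5n x x1 x2 hb
          have h4 := four_path' hT hadj e1 e2 x1 x2 (dist_eq_one_iff_adj.mp y1)
            (nz u y (by omega)).symm
          omega
      · by_cases hbx : G.Adj u x <;> by_cases hby : G.Adj u y
        · have a' := adj_dist_le' (b5b x x1 x2 hbx)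
          have b' := adj_dist_le' (b5b y y1 y2 hby)
          omega
        · have a' := adj_dist_le' (b5b x x1 x2 hbx)
          have b' := b5 y y1 y2
          omega
        · have a' := b5 x x1 x2
          have b' := adj_dist_le' (b5b y y1 y2 hby)
          omega
        · obtain ⟨e1x, e2x⟩ := hc5n x x1 x2 hbx
          obtain ⟨e1y, e2y⟩ := hc5n y y1 y2 hby
          by_cases hpp : p x = p y
          · have axp := adj_dist_le' (hmidu x x1 x2 hbx).2.2.2
            have ayp := adj_dist_le' (hmidu y y1 y2 hby).2.2.2
            have B := t2 (p x) x y
            have e : T'.dist (p x) y = T'.dist (p y) y := by rw [hpp]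
            have cx := dcc x (p x)
            omega
          · exfalso
            have h4 := four_path hT e1x e2x e1y e2y hpp hGxy.ne x1 y1
            omega
      · exfalso
        obtain ⟨z1, m1, m2⟩ := exists_mid x1
        obtain ⟨z2, m3, m4⟩ := exists_mid y1
        have h5 := five_path hT hadj m1 m2 x1 x2 m3 m4 y1 y2
        omega
    · -- x in class 6 (deep on v side)
      have ax := b6 x x1 x2
      have cxv := dcc x v
      have A := t2 v x y
      rcases cls y with he | he | ⟨y1, y2⟩ | ⟨y1, y2⟩ | ⟨y1, y2⟩ | ⟨y1, y2⟩
      · rw [he, dcc x u]; have := (hbu x).1; omega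
      · rw [he, dcc x v]; have := (hbu x).2; omega
      · by_cases hb : G.Adj v x
        · have a' := adj_dist_le' (b6b x x1 x2 hb)
          have b' := adj_dist_le' (b3 y y1 y2)
          have B := t2 u v y
          omega
        · exfalso
          obtain ⟨e1, e2⟩ := hc6n x x1 x2 hb
          have h4 := four_path' hT hadj.symm e1 e2 x1 x2 (dist_eq_one_iff_adj.mp y1)
            (nz v y (by omega)).symm
          omega
      · have := adj_dist_le' (b4 y y1 y2); omega
      · exfalso
        obtain ⟨z1, m1, m2⟩ := exists_mid x1
        obtain ⟨z2, m3, m4⟩ := exists_mid y1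
        have h5 := five_path hT hadj.symm m1 m2 x1 x2 m3 m4 y1 y2
        omega
      · by_cases hbx : G.Adj v x <;> by_cases hby : G.Adj v y
        · have a' := adj_dist_le' (b6b x x1 x2 hbx)
          have b' := adj_dist_le' (b6b y y1 y2 hby)
          omega
        · have a' := adj_dist_le' (b6b x x1 x2 hbx)
          have b' := b6 y y1 y2
          omega
        · have a' := b6 x x1 x2
          have b' := adj_dist_le' (b6b y y1 y2 hby)
          omega
        · obtain ⟨e1x, e2x⟩ := hc6n x x1 x2 hbx
          obtain ⟨e1y, e2y⟩ := hc6n y y1 y2 hby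
          by_cases hpp : p x = p y
          · have axp := adj_dist_le' (hmidv x x1 x2 hbx).2.2.2
            have ayp := adj_dist_le' (hmidv y y1 y2 hby).2.2.2
            have B := t2 (p x) x y
            have e : T'.dist (p x) y = T'.dist (p y) y := by rw [hpp]
            have cx := dcc x (p x)
            omega
          · exfalso
            have h4 := four_path hT e1x e2x e1y e2y hpp hGxy.ne x1 y1
            omega
  -- the spanner property
  have spanner : ∀ x y, T'.dist x y ≤ 3 * G.dist x y := by
    intro x y
    by_cases hxy : x = y
    · rw [hxy, SimpleGraph.dist_self]; omega
    have hre : G.Reachable x y := (hTc.preconnected x y).mono hle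
    have hg1 : 0 < G.dist x y := hre.pos_dist_of_ne hxy
    by_cases hg : G.dist x y = 1
    · have := key x y (dist_eq_one_iff_adj.mp hg)
      omega
    · have h2 : 2 ≤ G.dist x y := by omega
      have A := t2 u x y
      have B := t2 v x y
      have C := t2 v u y
      have D := t2 u v y
      have E := dcc x u
      have F := dcc x v
      have d1 := d'uv
      have d2 := tvu
      rcases hnear x with h | h <;> rcases hnear y with h' | h' <;> omega
  exact ⟨T', hle', hT', spanner, T'uv, hnear, conc_u, conc_v⟩
end

section
/- Let G be a finite simple graph with an edge uv such that every vertex of G lies in the closed neighborhood N_G[u] ∪ N_G[v]. Then the spanning subgraph T with edge set {ux : x ∈ N_G(u)} ∪ {vx : x ∈ N_G(v) \ N_G[u]} is a tree 3-spanner of G of diameter at most 3. -/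
private lemma exists_ne_ne_of_nodup {V : Type*} (u v : V) (l : List V)
    (hn : l.Nodup) (hl : 3 ≤ l.length) : ∃ x ∈ l, x ≠ u ∧ x ≠ v := by
  match l with
  | a :: b :: c :: t =>
    simp only [List.nodup_cons, List.mem_cons] at hn
    have hab : a ≠ b := fun h => hn.1 (by simp [h])
    have hac : a ≠ c := fun h => hn.1 (by simp [h])
    have hbc : b ≠ c := fun h => hn.2.1 (by simp [h])
    by_cases hau : a = u
    · by_cases hbv : b = v
      · exact ⟨c, by simp, fun h => hac (hau.trans h.symm), fun h => hbc (hbv.trans h.symm)⟩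
      · exact ⟨b, by simp, fun h => hab (by rw [hau, h]), hbv⟩
    · by_cases hav : a = v
      · by_cases hbu : b = u
        · exact ⟨c, by simp, fun h => hbc (by rw [hbu, h]), fun h => hac (by rw [hav, h])⟩
        · exact ⟨b, by simp, hbu, fun h => hab (by rw [hav, h])⟩
      · exact ⟨a, by simp, hau, hav⟩
  | [] => simp at hl
  | [a] => simp at hl
  | [a, b] => simp at hl

/-- If `N_G[u] ∪ N_G[v]` covers `G`, the double star at the edge `uv` is a tree 3-spanner
of `G` of diameter at most 3. -/
theorem stmt_5 {V : Type*} [Fintype V] (G : SimpleGraph V) (hG : G.Connected)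
    (u v : V) (huv : G.Adj u v)
    (hcov : ∀ w : V, w = u ∨ w = v ∨ G.Adj u w ∨ G.Adj v w)
    (T : SimpleGraph V)
    (hT : T = SimpleGraph.fromRel (fun x y =>
      (x = u ∧ G.Adj u y) ∨ (x = v ∧ G.Adj v y ∧ ¬ G.Adj u y ∧ y ≠ u))) :
    T ≤ G ∧ T.IsTree ∧ (∀ x y : V, T.dist x y ≤ 3 * G.dist x y) ∧
      (∀ x y : V, T.dist x y ≤ 3) := by
  have hadj : ∀ a b : V, T.Adj a b ↔ a ≠ b ∧
      ((a = u ∧ G.Adj u b) ∨ (a = v ∧ G.Adj v b ∧ ¬ G.Adj u b ∧ b ≠ u) ∨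
       (b = u ∧ G.Adj u a) ∨ (b = v ∧ G.Adj v a ∧ ¬ G.Adj u a ∧ a ≠ u)) := by
    subst hT
    intro a b
    rw [SimpleGraph.fromRel_adj]
    tauto
  -- T ≤ G
  have hle : T ≤ G := by
    intro a b hab
    rw [hadj] at hab
    obtain ⟨-, h⟩ := hab
    rcases h with ⟨rfl, h⟩ | ⟨rfl, h, -, -⟩ | ⟨rfl, h⟩ | ⟨rfl, h, -, -⟩
    · exact h
    · exact h
    · exact h.symm
    · exact h.symm
  have huvT : T.Adj u v := (hadj u v).mpr ⟨huv.ne, Or.inl ⟨rfl, huv⟩⟩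
  -- every vertex is u or adjacent in T to u or v
  have hhub : ∀ x : V, x = u ∨ T.Adj u x ∨ T.Adj v x := by
    intro x
    rcases hcov x with rfl | rfl | h | h
    · exact Or.inl rfl
    · exact Or.inr (Or.inl huvT)
    · exact Or.inr (Or.inl ((hadj u x).mpr ⟨h.ne, Or.inl ⟨rfl, h⟩⟩))
    · by_cases hux : G.Adj u x
      · exact Or.inr (Or.inl ((hadj u x).mpr ⟨hux.ne, Or.inl ⟨rfl, hux⟩⟩))
      · by_cases hxu : x = u
        · exact Or.inl hxu
        · exact Or.inr (Or.inr ((hadj v x).mpr ⟨h.ne, Or.inr (Or.inl ⟨rfl, h, hux, hxu⟩)⟩))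
  -- uniqueness of neighbor for non-center vertices
  have huniq : ∀ w a b : V, w ≠ u → w ≠ v → T.Adj w a → T.Adj w b → a = b := by
    intro w a b hwu hwv ha hb
    rw [hadj] at ha hb
    obtain ⟨-, ha⟩ := ha
    obtain ⟨-, hb⟩ := hb
    rcases ha with ⟨h, -⟩ | ⟨h, -⟩ | ⟨rfl, hau⟩ | ⟨rfl, -, hau, -⟩ <;>
      first
      | exact absurd h hwu
      | exact absurd h hwv
      | (rcases hb with ⟨h, -⟩ | ⟨h, -⟩ | ⟨rfl, hbu⟩ | ⟨rfl, -, hbu, -⟩ <;>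
          first
          | exact absurd h hwu
          | exact absurd h hwv
          | rfl
          | exact absurd hau hbu
          | exact absurd hbu hau)
  -- connectivity
  have hpre : ∀ x : V, T.Reachable x u := by
    intro x
    rcases hhub x with rfl | h | h
    · exact SimpleGraph.Reachable.refl x
    · exact h.symm.reachable
    · exact (h.symm.reachable).trans huvT.symm.reachable
  have hconn : T.Connected := by
    rw [SimpleGraph.connected_iff_exists_forall_reachable]
    exact ⟨u, fun x => (hpre x).symm⟩
  -- acyclicity
  have hacyc : T.IsAcyclic := by
    classical
    intro x c hc
    have hlen : 3 ≤ c.length := hc.three_le_length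
    have hnodup : c.support.tail.Nodup := hc.support_nodup
    have hlen' : 3 ≤ c.support.tail.length := by
      have h1 := SimpleGraph.Walk.length_support c
      have h2 : c.support.tail.length = c.support.length - 1 := List.length_tail
      omega
    obtain ⟨w, hwmem, hwu, hwv⟩ := exists_ne_ne_of_nodup u v c.support.tail hnodup hlen'
    have hwsup : w ∈ c.support := by
      rw [SimpleGraph.Walk.support_eq_cons]
      exact List.mem_cons_of_mem _ hwmem
    set c' := c.rotate w hwsup with hc'def
    have hc' : c'.IsCycle := hc.rotate hwsup
    have hnn : ¬ c'.Nil := hc'.not_nil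
    obtain ⟨a, ha, q, hq⟩ := SimpleGraph.Walk.not_nil_iff.mp hnn
    have hqlen : 0 < q.length := by
      have h1 : c'.length = q.length + 1 := by rw [hq]; simp
      have h2 : 3 ≤ c'.length := hc'.three_le_length
      omega
    have hqrnn : ¬ q.reverse.Nil := by
      rw [SimpleGraph.Walk.not_nil_iff_lt_length]
      simpa using hqlen
    obtain ⟨b, hb, q2, hq2⟩ := SimpleGraph.Walk.not_nil_iff.mp hqrnn
    have hab : a = b := huniq w a b hwu hwv ha hb
    have hmem : s(w, b) ∈ q.edges := by
      have : s(w, b) ∈ q.reverse.edges := by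
        rw [hq2]; simp
      rwa [SimpleGraph.Walk.edges_reverse, List.mem_reverse] at this
    have hnd : c'.edges.Nodup := hc'.edges_nodup
    rw [hq, SimpleGraph.Walk.edges_cons, List.nodup_cons] at hnd
    exact hnd.1 (hab ▸ hmem)
  -- diameter bound
  have hd3 : ∀ x y : V, T.dist x y ≤ 3 := by
    intro x y
    rcases hhub x with hx | hx | hx <;> rcases hhub y with hy | hy | hy <;>
      [skip; rw [hx]; rw [hx]; rw [hy]; skip; skip; rw [hy]; skip; skip]
    · rw [hx, hy]; simp [SimpleGraph.dist_self]
    · calc T.dist u y ≤ (SimpleGraph.Walk.cons hy .nil).length := T.dist_le _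
        _ ≤ 3 := by simp
    · calc T.dist u y ≤ (SimpleGraph.Walk.cons huvT (SimpleGraph.Walk.cons hy .nil)).length :=
          T.dist_le _
        _ ≤ 3 := by simp
    · calc T.dist x u ≤ (SimpleGraph.Walk.cons hx.symm .nil).length := T.dist_le _
        _ ≤ 3 := by simp
    · calc T.dist x y ≤ (SimpleGraph.Walk.cons hx.symm (SimpleGraph.Walk.cons hy .nil)).length :=
          T.dist_le _
        _ ≤ 3 := by simp
    · calc T.dist x y ≤ (SimpleGraph.Walk.cons hx.symm (SimpleGraph.Walk.cons huvT
          (SimpleGraph.Walk.cons hy .nil))).length := T.dist_le _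
        _ ≤ 3 := by simp
    · calc T.dist x u ≤ (SimpleGraph.Walk.cons hx.symm (SimpleGraph.Walk.cons huvT.symm
          .nil)).length := T.dist_le _
        _ ≤ 3 := by simp
    · calc T.dist x y ≤ (SimpleGraph.Walk.cons hx.symm (SimpleGraph.Walk.cons huvT.symm
          (SimpleGraph.Walk.cons hy .nil))).length := T.dist_le _
        _ ≤ 3 := by simp
    · calc T.dist x y ≤ (SimpleGraph.Walk.cons hx.symm (SimpleGraph.Walk.cons hy .nil)).length :=
          T.dist_le _
        _ ≤ 3 := by simp
  refine ⟨hle, ⟨hconn, hacyc⟩, ?_, hd3⟩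
  intro x y
  by_cases hxy : x = y
  · subst hxy; simp [SimpleGraph.dist_self]
  · have h1 : 1 ≤ G.dist x y := hG.pos_dist_of_ne hxy
    calc T.dist x y ≤ 3 := hd3 x y
      _ ≤ 3 * G.dist x y := by omega
end

section
/- Let G be a finite simple graph with a uv-concentrated tree 3-spanner T, and let Q be a connected component of G \ N_G[u,v] containing a vertex p at T-distance exactly 2 from u. Let Q^u be the connected component of G \ N_G[u] containing Q, and let r be the T-neighbor of p (so that r is T-adjacent to u). Then every vertex of Q^u is T-adjacent to r. -/
open SimpleGraph

/-- In a tree, every path realizes the distance. -/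
lemma tree_path_length_s7 {V : Type*} [DecidableEq V] {T : SimpleGraph V} (hT : T.IsTree) {x z : V}
    (p : T.Walk x z) (hp : p.IsPath) : p.length = T.dist x z := by
  obtain ⟨q, hq⟩ := (hT.isConnected x z).exists_walk_length_eq_dist
  have huniq := isAcyclic_iff_path_unique.mp hT.IsAcyclic
    (⟨p, hp⟩ : T.Path x z) ⟨q.bypass, q.bypass_isPath⟩
  have : p = q.bypass := congrArg Subtype.val huniq
  have h1 : p.length ≤ q.length := this ▸ q.length_bypass_le
  have h2 := SimpleGraph.dist_le p
  omega

/-- In a tree, a vertex on the (unique) path splits the distance additively. -/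
lemma tree_dist_split {V : Type*} [DecidableEq V] {T : SimpleGraph V} (hT : T.IsTree) {x z m : V}
    (p : T.Walk x z) (hp : p.IsPath) (hm : m ∈ p.support) :
    T.dist x z = T.dist x m + T.dist m z := by
  have h1 := tree_path_length_s7 hT (p.takeUntil m hm) (hp.takeUntil hm)
  have h2 := tree_path_length_s7 hT (p.dropUntil m hm) (hp.dropUntil hm)
  have h3 := tree_path_length_s7 hT p hp
  have h4 : (p.takeUntil m hm).length + (p.dropUntil m hm).length = p.length := by
    rw [← SimpleGraph.Walk.length_append, p.take_spec hm]
  omega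

lemma tree_dist_adj {V : Type*} {T : SimpleGraph V} (hT : T.IsTree) {x y : V}
    (h : T.Adj x y) : T.dist x y = 1 :=
  SimpleGraph.dist_eq_one_iff_adj.mpr h

/-- In a `uv`-concentrated tree 3-spanner, if a component of `G \ N_G[u,v]` contains a vertex
`p` at `T`-distance 2 from `u` with `T`-neighbor `r` (so `r` is `T`-adjacent to `u`), then every
vertex of the component `Q^u` of `G \ N_G[u]` containing `p` is `T`-adjacent to `r`. -/
theorem stmt_7 {V : Type*} [Fintype V] (G T : SimpleGraph V) (u v p r : V)
    (hle : T ≤ G) (hT : T.IsTree)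
    (hspan : ∀ x y : V, T.dist x y ≤ 3 * G.dist x y)
    (hadj : T.Adj u v)
    (hcenter : ∀ w : V, T.dist u w ≤ 2 ∨ T.dist v w ≤ 2)
    (hconc_u : ∀ w : V, G.Adj u w → T.dist w u < T.dist w v → T.Adj u w)
    (hconc_v : ∀ w : V, G.Adj v w → T.dist w v < T.dist w u → T.Adj v w)
    (hp : ¬ (p = u ∨ p = v ∨ G.Adj u p ∨ G.Adj v p))
    (hdist : T.dist u p = 2) (hpr : T.Adj p r) (hru : T.Adj r u)
    (Su : Set V) (hSu : Su = {w | w ≠ u ∧ ¬ G.Adj u w}) (hpSu : p ∈ Su) :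
    ∀ w : V, ∀ hw : w ∈ Su,
      (G.induce Su).Reachable ⟨p, hpSu⟩ ⟨w, hw⟩ → T.Adj r w := by
  classical
  have hSu' : ∀ x : V, x ∈ Su → x ≠ u ∧ ¬ G.Adj u x := by
    intro x hx; rw [hSu] at hx; exact hx
  have hur : T.Adj u r := hru.symm
  have hGuv : G.Adj u v := hle hadj
  have hGur : G.Adj u r := hle hur
  have hvr : v ≠ r := by
    rintro rfl
    exact hp (Or.inr (Or.inr (Or.inr ((hle hpr).symm))))
  have hru' : r ≠ u := hru.ne
  have hvu : v ≠ u := hadj.ne'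
  -- key step
  have key : ∀ w w' : V, w ∈ Su → w' ∈ Su → T.Adj r w → G.Adj w w' → T.Adj r w' := by
    intro w w' hw hw' hrw hG
    obtain ⟨hwu, hwGu⟩ := hSu' w hw
    obtain ⟨hw'u, hw'Gu⟩ := hSu' w' hw'
    have hwv : w ≠ v := fun h => hwGu (h ▸ hGuv)
    have hwr : w ≠ r := fun h => hwGu (h ▸ hGur)
    have hw'v : w' ≠ v := fun h => hw'Gu (h ▸ hGuv)
    have hw'r : w' ≠ r := fun h => hw'Gu (h ▸ hGur)
    have hww' : w ≠ w' := hG.ne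
    -- G.dist w w' = 1
    have hdG : G.dist w w' = 1 := SimpleGraph.dist_eq_one_iff_adj.mpr hG
    have hdT3 : T.dist w w' ≤ 3 := by
      have := hspan w w'; rw [hdG] at this; omega
    -- distances among u v r w
    have dru : T.dist r u = 1 := tree_dist_adj hT hru
    have drw : T.dist r w = 1 := tree_dist_adj hT hrw
    have dwr : T.dist w r = 1 := tree_dist_adj hT hrw.symm
    have duv : T.dist u v = 1 := tree_dist_adj hT hadj
    -- T.dist u w' ≥ 2
    have hdu2 : 2 ≤ T.dist u w' := by
      rcases Nat.lt_or_ge (T.dist u w') 2 with h | h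
      · interval_cases h' : T.dist u w'
        · exact absurd (((hT.isConnected u w').dist_eq_zero_iff).mp h') (Ne.symm hw'u)
        · exact absurd (hle (SimpleGraph.dist_eq_one_iff_adj.mp h')) hw'Gu
      · exact h
    -- T.dist w u = 2 via path w - r - u
    have dwu : T.dist w u = 2 := by
      have hpath : (SimpleGraph.Walk.cons hrw.symm
          (SimpleGraph.Walk.cons hru SimpleGraph.Walk.nil) : T.Walk w u).IsPath := by
        simp [SimpleGraph.Walk.cons_isPath_iff, hwu, hwr, hru', hadj.ne]
      have := tree_path_length_s7 hT _ hpath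
      simpa using this.symm
    -- T.dist w v = 3 via path w - r - u - v
    have dwv : T.dist w v = 3 := by
      have hpath : (SimpleGraph.Walk.cons hrw.symm (SimpleGraph.Walk.cons hru
          (SimpleGraph.Walk.cons hadj SimpleGraph.Walk.nil)) : T.Walk w v).IsPath := by
        simp [SimpleGraph.Walk.cons_isPath_iff, hwu, hwr, hwv, hru', Ne.symm hvr, hvu, hadj.ne]
      have := tree_path_length_s7 hT _ hpath
      simpa using this.symm
    -- T.dist r v = 2 via path r - u - v
    have drv : T.dist r v = 2 := by
      have hpath : (SimpleGraph.Walk.cons hru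
          (SimpleGraph.Walk.cons hadj SimpleGraph.Walk.nil) : T.Walk r v).IsPath := by
        simp [SimpleGraph.Walk.cons_isPath_iff, hru', Ne.symm hvr, hvu, hadj.ne]
      have := tree_path_length_s7 hT _ hpath
      simpa using this.symm
    -- the unique path from w to w'
    obtain ⟨W⟩ := hT.isConnected w w'
    set R := W.bypass with hRdef
    have hR : R.IsPath := W.bypass_isPath
    have hRlen : R.length = T.dist w w' := tree_path_length_s7 hT R hR
    by_cases hrR : r ∈ R.support
    · -- r on the path: T.dist w w' = 1 + T.dist r w'
      have hsplit := tree_dist_split hT R hR hrR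
      rw [dwr] at hsplit
      have hrw'pos : 1 ≤ T.dist r w' := by
        rcases Nat.eq_zero_or_pos (T.dist r w') with h | h
        · exact absurd (((hT.isConnected r w').dist_eq_zero_iff).mp h) (Ne.symm hw'r)
        · exact h
      have hrw'le : T.dist r w' ≤ 2 := by omega
      rcases Nat.lt_or_ge (T.dist r w') 2 with h | h
      · -- T.dist r w' = 1
        exact SimpleGraph.dist_eq_one_iff_adj.mp (by omega)
      · -- T.dist r w' = 2 : contradiction
        exfalso
        have hd2 : T.dist r w' = 2 := by omega
        obtain ⟨W2⟩ := hT.isConnected r w'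
        set Q := W2.bypass with hQdef
        have hQ : Q.IsPath := W2.bypass_isPath
        have hQlen : Q.length = 2 := by rw [tree_path_length_s7 hT Q hQ, hd2]
        have huQ : u ∉ Q.support := by
          intro hm
          have := tree_dist_split hT Q hQ hm
          rw [dru, hd2] at this
          omega
        have hvQ : v ∉ Q.support := by
          intro hm
          have := tree_dist_split hT Q hQ hm
          rw [drv, hd2] at this
          have : T.dist v w' = 0 := by omega
          exact (Ne.symm hw'v) (((hT.isConnected v w').dist_eq_zero_iff).mp this)
        have hQu : (SimpleGraph.Walk.cons hur Q).IsPath := hQ.cons huQ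
        have hQv : (SimpleGraph.Walk.cons hadj.symm (SimpleGraph.Walk.cons hur Q)).IsPath := by
          refine hQu.cons ?_
          simp [SimpleGraph.Walk.support_cons, hvu, hvQ]
        have hduw' : T.dist u w' = 3 := by
          have := tree_path_length_s7 hT _ hQu
          simp only [SimpleGraph.Walk.length_cons, hQlen] at this
          omega
        have hdvw' : T.dist v w' = 4 := by
          have := tree_path_length_s7 hT _ hQv
          simp only [SimpleGraph.Walk.length_cons, hQlen] at this
          omega
        rcases hcenter w' with h' | h' <;> omega
    · -- r not on the path from w to w': contradiction
      exfalso
      have huR : u ∉ R.support := by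
        intro hm
        have := tree_dist_split hT R hR hm
        rw [dwu] at this
        omega
      have hvR : v ∉ R.support := by
        intro hm
        have := tree_dist_split hT R hR hm
        rw [dwv] at this
        have : T.dist v w' = 0 := by omega
        exact (Ne.symm hw'v) (((hT.isConnected v w').dist_eq_zero_iff).mp this)
      have hRpos : 1 ≤ R.length := by
        rcases Nat.eq_zero_or_pos R.length with h | h
        · exact absurd (R.eq_of_length_eq_zero h) hww'
        · exact h
      have hRr : (SimpleGraph.Walk.cons hrw R).IsPath := hR.cons hrR
      have hRu : (SimpleGraph.Walk.cons hur (SimpleGraph.Walk.cons hrw R)).IsPath := by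
        refine hRr.cons ?_
        simp [SimpleGraph.Walk.support_cons, Ne.symm hru', huR]
      have hRv : (SimpleGraph.Walk.cons hadj.symm
          (SimpleGraph.Walk.cons hur (SimpleGraph.Walk.cons hrw R))).IsPath := by
        refine hRu.cons ?_
        simp [SimpleGraph.Walk.support_cons, hvu, hvr, hvR]
      have hduw' : T.dist u w' = 2 + R.length := by
        have := tree_path_length_s7 hT _ hRu
        simp only [SimpleGraph.Walk.length_cons] at this
        omega
      have hdvw' : T.dist v w' = 3 + R.length := by
        have := tree_path_length_s7 hT _ hRv
        simp only [SimpleGraph.Walk.length_cons] at this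
        omega
      rcases hcenter w' with h' | h' <;> omega
  -- conclude by induction along the reachability walk in the induced graph
  intro w hw hreach
  obtain ⟨pw⟩ := hreach
  have main : ∀ (a b : ↑Su) (q : (G.induce Su).Walk a b), T.Adj r ↑a → T.Adj r ↑b := by
    intro a b q
    induction q with
    | nil => exact id
    | cons h q ih =>
      intro ha
      exact ih (key _ _ (by exact Subtype.coe_prop _) (by exact Subtype.coe_prop _) ha h)
  exact main _ _ pw hpr.symm
end

section
/- Let G be a finite simple graph with a uv-concentrated tree 3-spanner T, let Q be a connected component of G \ N_G[u,v] containing a vertex at T-distance exactly 2 from u, and let Q^u be the connected component of G \ N_G[u] containing Q. Then every vertex of N_G(Q^u) (the set of vertices outside Q^u with a G-neighbor in Q^u) is T-adjacent to u. -/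
open SimpleGraph

section Aux

variable {V : Type*} {T : SimpleGraph V}

/-- If `c` lies on a walk from `s` to `t`, then `dist s c + dist c t ≤ length`. -/
private lemma aux_dist_split {s t c : V} (W : T.Walk s t) (h : c ∈ W.support) :
    T.dist s c + T.dist c t ≤ W.length := by
  classical
  have hspec := W.take_spec h
  have hlen := congrArg Walk.length hspec
  rw [Walk.length_append] at hlen
  have h1 := T.dist_le (W.takeUntil c h)
  have h2 := T.dist_le (W.dropUntil c h)
  omega

/-- In a tree with an edge `u v`, no vertex is equidistant from `u` and `v`. -/
private lemma aux_ne (hT : T.IsTree) {u v : V} (hadj : T.Adj u v) (x : V) :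
    T.dist x u ≠ T.dist x v := by
  intro h
  have hconn := hT.isConnected
  obtain ⟨P, hP, hPl⟩ := hconn.exists_path_of_dist x u
  obtain ⟨Q, hQ, hQl⟩ := hconn.exists_path_of_dist x v
  have huv1 : T.dist u v = 1 := dist_eq_one_iff_adj.mpr hadj
  have hvP : v ∉ P.support := by
    intro hv
    have := aux_dist_split P hv
    have hvu : T.dist v u = 1 := dist_eq_one_iff_adj.mpr hadj.symm
    have hxv := h
    omega
  have hW2 : (P.concat hadj).IsPath := by
    rw [Walk.isPath_def, Walk.support_concat]
    have := List.Nodup.concat hvP ((Walk.isPath_def _).mp hP)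
    rwa [List.concat_eq_append] at this
  have := (hT.existsUnique_path x v).unique hW2 hQ
  have hlen : (P.concat hadj).length = Q.length := by rw [this]
  rw [Walk.length_concat] at hlen
  omega

/-- In a tree with an edge `u v`, if `a` is strictly on the `v`-side and `b` strictly on the
`u`-side, and `a`, `b` are adjacent, then `a = v` and `b = u`. -/
private lemma aux_edge (hT : T.IsTree) {u v a b : V} (hadj : T.Adj u v) (hab : T.Adj a b)
    (ha : T.dist a u = T.dist a v + 1) (hb : T.dist b v = T.dist b u + 1) :
    a = v ∧ b = u := by
  have hconn := hT.isConnected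
  have hab1 : T.dist a b = 1 := dist_eq_one_iff_adj.mpr hab
  have hba1 : T.dist b a = 1 := dist_eq_one_iff_adj.mpr hab.symm
  have huv1 : T.dist u v = 1 := dist_eq_one_iff_adj.mpr hadj
  have t1 := hconn.dist_triangle (u := a) (v := b) (w := u)
  have t2 := hconn.dist_triangle (u := b) (v := a) (w := v)
  -- so `T.dist b u = T.dist a v` and `T.dist b v = T.dist a v + 1`
  have hbu : T.dist b u = T.dist a v := by omega
  set e := T.dist a v with he
  by_cases he0 : e = 0
  · constructor
    · exact (hconn.dist_eq_zero_iff.mp (by omega))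
    · exact (hconn.dist_eq_zero_iff.mp (by omega))
  · exfalso
    obtain ⟨Q, hQ, hQl⟩ := hconn.exists_path_of_dist b u
    obtain ⟨P, hP, hPl⟩ := hconn.exists_path_of_dist a v
    have haQ : a ∉ Q.support := by
      intro hv
      have := aux_dist_split Q hv
      omega
    have hW1 : (Q.cons hab).IsPath := hQ.cons haQ
    have huP : u ∉ P.support := by
      intro hv
      have := aux_dist_split P hv
      omega
    have hW2 : (P.concat hadj.symm).IsPath := by
      rw [Walk.isPath_def, Walk.support_concat]
      have := List.Nodup.concat huP ((Walk.isPath_def _).mp hP)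
      rwa [List.concat_eq_append] at this
    have heq := (hT.existsUnique_path a u).unique hW1 hW2
    have hbmem : b ∈ (Q.cons hab).support := by
      rw [Walk.support_cons]
      exact List.mem_cons_of_mem _ Q.start_mem_support
    rw [heq, Walk.support_concat, List.mem_append] at hbmem
    rcases hbmem with hbP | hbu'
    · have := aux_dist_split P hbP
      omega
    · rw [List.mem_singleton] at hbu'
      rw [hbu'] at hab1
      omega

/-- Side dichotomy. -/
private lemma aux_dicho (hT : T.IsTree) {u v : V} (hadj : T.Adj u v) (x : V) :
    T.dist x u = T.dist x v + 1 ∨ T.dist x v = T.dist x u + 1 := by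
  have hconn := hT.isConnected
  have huv1 : T.dist u v = 1 := dist_eq_one_iff_adj.mpr hadj
  have hvu1 : T.dist v u = 1 := dist_eq_one_iff_adj.mpr hadj.symm
  have t1 := hconn.dist_triangle (u := x) (v := u) (w := v)
  have t2 := hconn.dist_triangle (u := x) (v := v) (w := u)
  have := aux_ne hT hadj x
  omega

/-- Any walk from the `v`-side to the `u`-side must cross the edge `u v`. -/
private lemma aux_walk_bound (hT : T.IsTree) {u v : V} (hadj : T.Adj u v) :
    ∀ {x y : V} (W : T.Walk x y), T.dist x u = T.dist x v + 1 →
      T.dist y v = T.dist y u + 1 → T.dist x v + 1 + T.dist u y ≤ W.length := by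
  intro x y W
  induction W with
  | nil => intro hx hy; omega
  | @cons a c d h W ih =>
    intro hx hy
    rcases aux_dicho hT hadj c with hc | hc
    · have ihc := ih hc hy
      have t : T.dist a v ≤ T.dist a c + T.dist c v := hT.isConnected.dist_triangle
      have hac1 : T.dist a c = 1 := dist_eq_one_iff_adj.mpr h
      simp only [Walk.length_cons]
      omega
    · obtain ⟨hav, hcu⟩ := aux_edge hT hadj h hx hc
      have h1 := T.dist_le W
      have h2 : T.dist u d = T.dist c d := by rw [hcu]
      have h0 : T.dist a v = 0 := by rw [hav]; simp
      simp only [Walk.length_cons]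
      omega

/-- Crossing lemma for distances. -/
private lemma aux_cross (hT : T.IsTree) {u v x y : V} (hadj : T.Adj u v)
    (hx : T.dist x u = T.dist x v + 1) (hy : T.dist y v = T.dist y u + 1) :
    T.dist x v + 1 + T.dist u y ≤ T.dist x y := by
  obtain ⟨W, hWl⟩ := hT.isConnected.exists_walk_length_eq_dist x y
  rw [← hWl]
  exact aux_walk_bound hT hadj W hx hy

end Aux

/-- In a `uv`-concentrated tree 3-spanner, if a component of `G \ N_G[u,v]` contains a vertex
`p` at `T`-distance 2 from `u`, and `Q^u` is the component of `G \ N_G[u]` containing `p`, then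
every vertex of `N_G(Q^u)` is `T`-adjacent to `u`. -/
theorem stmt_8 {V : Type*} [Fintype V] (G T : SimpleGraph V) (u v p : V)
    (hle : T ≤ G) (hT : T.IsTree)
    (hspan : ∀ x y : V, T.dist x y ≤ 3 * G.dist x y)
    (hadj : T.Adj u v)
    (hcenter : ∀ w : V, T.dist u w ≤ 2 ∨ T.dist v w ≤ 2)
    (hconc_u : ∀ w : V, G.Adj u w → T.dist w u < T.dist w v → T.Adj u w)
    (hconc_v : ∀ w : V, G.Adj v w → T.dist w v < T.dist w u → T.Adj v w)
    (hp : ¬ (p = u ∨ p = v ∨ G.Adj u p ∨ G.Adj v p))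
    (hdist : T.dist u p = 2)
    (Su : Set V) (hSu : Su = {w | w ≠ u ∧ ¬ G.Adj u w}) (hpSu : p ∈ Su)
    (Qu : Set V)
    (hQu : Qu = {w | ∃ hw : w ∈ Su, (G.induce Su).Reachable ⟨p, hpSu⟩ ⟨w, hw⟩}) :
    ∀ z : V, z ∉ Qu → (∃ w ∈ Qu, G.Adj z w) → T.Adj u z := by
  push_neg at hp
  obtain ⟨hpu, hpv, hGup, hGvp⟩ := hp
  have hconn := hT.isConnected
  have hGuv : G.Adj u v := hle hadj
  -- vertices of `Su` on the `u`-side are at `T`-distance exactly 2 from `u`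
  have key1 : ∀ x, x ∈ Su → T.dist x v = T.dist x u + 1 → T.dist u x = 2 := by
    intro x hxS hxside
    rw [hSu] at hxS
    obtain ⟨hxu, hxG⟩ := hxS
    have hne1 : T.dist u x ≠ 1 := by
      intro h1
      exact hxG (hle (dist_eq_one_iff_adj.mp h1))
    have hne0 : T.dist u x ≠ 0 := by
      intro h0
      exact hxu (hconn.dist_eq_zero_iff.mp h0).symm
    have hcomm : T.dist u x = T.dist x u := dist_comm ..
    have hcomm' : T.dist v x = T.dist x v := dist_comm ..
    rcases hcenter x with h | h
    · omega
    · omega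
  -- being on the `u`-side propagates along `G`-edges inside `Su`
  have key2 : ∀ x y, x ∈ Su → y ∈ Su → T.dist x v = T.dist x u + 1 → G.Adj x y →
      T.dist y v = T.dist y u + 1 := by
    intro x y hxS hyS hxside hxy
    rcases aux_dicho hT hadj y with hy | hy
    · exfalso
      have hc := aux_cross hT hadj hy hxside
      have hux : T.dist u x = 2 := key1 x hxS hxside
      have hyv1 : 1 ≤ T.dist y v := by
        have : y ≠ v := by
          rintro rfl
          rw [hSu] at hyS
          exact hyS.2 hGuv
        have := hconn.pos_dist_of_ne this
        omega
      have hG1 : G.dist y x = 1 := dist_eq_one_iff_adj.mpr hxy.symm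
      have hs := hspan y x
      rw [hG1] at hs
      omega
    · exact hy
  -- `p` is on the `u`-side
  have hpside : T.dist p v = T.dist p u + 1 := by
    rcases aux_dicho hT hadj p with h | h
    · exfalso
      have hcomm : T.dist u p = T.dist p u := dist_comm ..
      have hpv1 : T.dist p v = 1 := by omega
      exact hGvp (hle (dist_eq_one_iff_adj.mp hpv1).symm)
    · exact h
  -- every vertex of `Qu` is on the `u`-side
  have keyQ : ∀ x, x ∈ Qu → x ∈ Su ∧ T.dist x v = T.dist x u + 1 := by
    intro x hxQ
    rw [hQu] at hxQ
    obtain ⟨hw, hreach⟩ := hxQ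
    refine ⟨hw, ?_⟩
    obtain ⟨W⟩ := hreach
    have : ∀ (a b : Su) (W : (G.induce Su).Walk a b),
        T.dist (a : V) v = T.dist (a : V) u + 1 → T.dist (b : V) v = T.dist (b : V) u + 1 := by
      intro a b W
      induction W with
      | nil => exact fun h => h
      | @cons a' c' b' h W ih =>
        intro ha
        have hG : G.Adj (a' : V) (c' : V) := h
        exact ih (key2 _ _ a'.2 c'.2 ha hG)
    exact this _ _ W hpside
  -- main argument
  intro z hzQ ⟨w, hwQ, hzw⟩
  obtain ⟨hwS, hwside⟩ := keyQ w hwQ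
  have hzS : z ∉ Su := by
    intro hzS
    apply hzQ
    rw [hQu]
    refine ⟨hzS, ?_⟩
    rw [hQu] at hwQ
    obtain ⟨hw, hreach⟩ := hwQ
    exact hreach.trans (Adj.reachable (by exact hzw.symm : G.Adj w z))
  rw [hSu] at hzS
  simp only [Set.mem_setOf_eq, not_and, not_not] at hzS
  by_cases hzu : z = u
  · exfalso
    subst hzu
    rw [hSu] at hwS
    exact hwS.2 hzw
  · have hGuz : G.Adj u z := hzS hzu
    rcases aux_dicho hT hadj z with hz | hz
    · -- `z` on the `v`-side: forces `z = v`
      have hc := aux_cross hT hadj hz hwside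
      have huw : T.dist u w = 2 := key1 w hwS hwside
      have hG1 : G.dist z w = 1 := dist_eq_one_iff_adj.mpr hzw
      have hs := hspan z w
      rw [hG1] at hs
      have hzv : T.dist z v = 0 := by omega
      have : z = v := hconn.dist_eq_zero_iff.mp hzv
      subst this
      exact hadj
    · exact hconc_u z hGuz (by omega)
end

section
/- Let T be a tree 3-spanner of a finite simple graph G with 5-center {u,v}, and let w be a G-neighbor of u that is strictly closer in T to u than to v and is not T-adjacent to u. Then w is a leaf of T, and if q denotes the T-neighbor of w, the tree T' obtained from T by deleting edge wq and adding edge wu is again a tree 3-spanner of G with 5-center {u,v}. -/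
open SimpleGraph

namespace Stmt9Aux

variable {V : Type*}

lemma dist_le_one_of_adj {H : SimpleGraph V} {a b : V} (h : H.Adj a b) : H.dist a b ≤ 1 := by
  simpa using SimpleGraph.dist_le (Walk.cons h Walk.nil)

lemma tree_path_dist {T : SimpleGraph V} (hT : T.IsTree) {x y : V}
    (p : T.Walk x y) (hp : p.IsPath) : T.dist x y = p.length := by
  obtain ⟨p0, hp0, hl0⟩ := hT.isConnected.exists_path_of_dist x y
  obtain ⟨r, hr, hur⟩ := hT.existsUnique_path x y
  calc T.dist x y = p0.length := hl0.symm
    _ = r.length := by rw [hur p0 hp0]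
    _ = p.length := by rw [hur p hp]

lemma leaf_first_edge {H : SimpleGraph V} {w q : V} (hl : ∀ x, H.Adj w x → x = q) :
    ∀ {y : V} (p : H.Walk w y), w ≠ y → s(w, q) ∈ p.edges := by
  intro y p hne
  cases p with
  | nil => exact absurd rfl hne
  | cons h p' =>
    obtain rfl := hl _ h
    simp

lemma leaf_not_mem_support [DecidableEq V] {H : SimpleGraph V} {w q : V} (hl : ∀ x, H.Adj w x → x = q)
    {a b : V} (p : H.Walk a b) (hp : p.IsTrail) (ha : a ≠ w) (hb : b ≠ w) :
    w ∉ p.support := by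
  intro hmem
  have hsplit := p.take_spec hmem
  have hedges : p.edges = (p.takeUntil w hmem).edges ++ (p.dropUntil w hmem).edges := by
    rw [← Walk.edges_append, hsplit]
  have h1 : s(w, q) ∈ (p.dropUntil w hmem).edges :=
    leaf_first_edge hl _ (Ne.symm hb)
  have h2 : s(w, q) ∈ (p.takeUntil w hmem).edges := by
    have := leaf_first_edge hl (p.takeUntil w hmem).reverse (Ne.symm ha)
    rwa [Walk.edges_reverse, List.mem_reverse] at this
  have hnd := hp.edges_nodup
  rw [hedges] at hnd
  exact (List.disjoint_of_nodup_append hnd) h2 h1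

lemma exists_mid {H : SimpleGraph V} {u w : V} (h : H.Reachable u w) (hd : H.dist u w = 2) :
    ∃ z, H.Adj u z ∧ H.Adj z w := by
  obtain ⟨p, hpl⟩ := h.exists_walk_length_eq_dist
  rw [hd] at hpl
  cases p with
  | nil => simp at hpl
  | cons h1 p1 =>
    cases p1 with
    | nil => simp at hpl
    | cons h2 p2 =>
      cases p2 with
      | nil => exact ⟨_, h1, h2⟩
      | cons h3 p3 => simp [Walk.length_cons] at hpl

lemma exists_adj_dist {H : SimpleGraph V} (hc : H.Connected) {w y : V} {n : ℕ}
    (hd : H.dist w y = n + 1) : ∃ z, H.Adj z y ∧ H.dist w z = n := by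
  obtain ⟨p, hpl⟩ := hc.exists_walk_length_eq_dist y w
  rw [SimpleGraph.dist_comm, hd] at hpl
  cases p with
  | nil => simp at hpl
  | cons h1 p1 =>
    rename_i z
    refine ⟨z, h1.symm, ?_⟩
    have hlen : p1.length = n := by
      have := hpl
      simp [Walk.length_cons] at this
      omega
    have hle1 : H.dist z w ≤ n := hlen ▸ SimpleGraph.dist_le p1
    rw [SimpleGraph.dist_comm] at hle1
    have ht : H.dist w y ≤ H.dist w z + H.dist z y := hc.dist_triangle
    have h2 : H.dist z y ≤ 1 := dist_le_one_of_adj h1.symm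
    omega

lemma leaf_dist {H : SimpleGraph V} (hc : H.Connected) {w q : V} (hq : H.Adj w q)
    (hl : ∀ x, H.Adj w x → x = q) {y : V} (hy : y ≠ w) :
    H.dist w y = 1 + H.dist q y := by
  apply le_antisymm
  · obtain ⟨p, hpl⟩ := hc.exists_walk_length_eq_dist q y
    have := SimpleGraph.dist_le (Walk.cons hq p)
    simp [Walk.length_cons, hpl] at this
    omega
  · obtain ⟨p, hpl⟩ := hc.exists_walk_length_eq_dist w y
    cases p with
    | nil => exact absurd rfl hy.symm
    | cons h1 p1 =>
      obtain rfl := hl _ h1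
      have := SimpleGraph.dist_le p1
      simp [Walk.length_cons] at hpl
      omega

end Stmt9Aux
open Stmt9Aux SimpleGraph in
/-- If `w` is a `G`-neighbor of `u` strictly closer in `T` to `u` than to `v` but not
`T`-adjacent to `u`, then `w` is a leaf of `T`, and replacing the pendant edge `wq` by `wu`
yields again a tree 3-spanner of `G` with 5-center `{u,v}`. -/
theorem stmt_9 {V : Type*} [Fintype V] (G T : SimpleGraph V) (u v w : V)
    (hle : T ≤ G) (hT : T.IsTree)
    (hspan : ∀ x y : V, T.dist x y ≤ 3 * G.dist x y)
    (hadj : T.Adj u v)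
    (hcenter : ∀ z : V, T.dist u z ≤ 2 ∨ T.dist v z ≤ 2)
    (hw : G.Adj u w) (hclose : T.dist w u < T.dist w v) (hna : ¬ T.Adj u w) :
    (∃! q : V, T.Adj w q) ∧
    ∀ q : V, T.Adj w q →
      ∀ T' : SimpleGraph V,
        T' = T.deleteEdges {s(w, q)} ⊔ SimpleGraph.fromEdgeSet {s(w, u)} →
        T' ≤ G ∧ T'.IsTree ∧ (∀ x y : V, T'.dist x y ≤ 3 * G.dist x y) ∧
          T'.Adj u v ∧ (∀ z : V, T'.dist u z ≤ 2 ∨ T'.dist v z ≤ 2) := by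
  classical
  have hTc := hT.isConnected
  have hGc : G.Connected := SimpleGraph.Connected.mono hle hTc
  have hwu : w ≠ u := hw.ne'
  have h0 : T.dist w u ≠ 0 := fun h => hwu (hTc.dist_eq_zero_iff.mp h)
  have h1 : T.dist w u ≠ 1 := fun h => hna (SimpleGraph.dist_eq_one_iff_adj.mp h).symm
  have hdwu : T.dist w u = 2 := by
    rcases hcenter w with h | h
    · rw [SimpleGraph.dist_comm] at h; omega
    · rw [SimpleGraph.dist_comm] at h; omega
  have hdwv : 3 ≤ T.dist w v := by omega
  have hwv : w ≠ v := by
    intro h; rw [h, SimpleGraph.dist_self] at hdwv; omega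
  have hduw : T.dist u w = 2 := by rw [SimpleGraph.dist_comm]; exact hdwu
  obtain ⟨q₀, hq1, hq2⟩ := exists_mid (hTc u w) hduw
  have hvq : v ≠ q₀ := by
    intro h
    rw [← h] at hq2
    have : T.dist v w ≤ 1 := dist_le_one_of_adj hq2
    rw [SimpleGraph.dist_comm] at this; omega
  -- leaf property
  have hleaf : ∀ x, T.Adj w x → x = q₀ := by
    intro x hx
    by_contra hne
    have hxu : x ≠ u := fun h => hna (h ▸ hx).symm
    have hxv : x ≠ v := by
      intro h
      have : T.dist w v ≤ 1 := dist_le_one_of_adj (h ▸ hx)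
      omega
    have P0 : (Walk.cons hx Walk.nil : T.Walk w x).IsPath :=
      Walk.IsPath.nil.cons (by simp [hx.ne])
    have P1 : (Walk.cons hq2 (Walk.cons hx Walk.nil) : T.Walk q₀ x).IsPath :=
      P0.cons (by simp [hq2.ne, Ne.symm hne])
    have P2 : (Walk.cons hq1 (Walk.cons hq2 (Walk.cons hx Walk.nil)) : T.Walk u x).IsPath :=
      P1.cons (by simp [hq1.ne, Ne.symm hwu, Ne.symm hxu])
    have P3 : (Walk.cons hadj.symm (Walk.cons hq1 (Walk.cons hq2 (Walk.cons hx Walk.nil))) :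
        T.Walk v x).IsPath :=
      P2.cons (by simp [hadj.ne', hvq, Ne.symm hwv, Ne.symm hxv])
    have hdux : T.dist u x = 3 := by
      have := tree_path_dist hT _ P2
      simpa using this
    have hdvx : T.dist v x = 4 := by
      have := tree_path_dist hT _ P3
      simpa using this
    rcases hcenter x with h | h <;> omega
  refine ⟨⟨q₀, hq2.symm, fun x hx => hleaf x hx⟩, ?_⟩
  intro q hq T' hT'def
  obtain rfl : q = q₀ := hleaf q hq
  -- adjacency characterization of T'
  have hT'adj : ∀ a b : V, T'.Adj a b ↔
      ((T.Adj a b ∧ s(a, b) ≠ s(w, q)) ∨ s(a, b) = s(w, u)) := by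
    intro a b
    rw [hT'def, SimpleGraph.sup_adj, SimpleGraph.deleteEdges_adj,
      SimpleGraph.fromEdgeSet_adj, Set.mem_singleton_iff, Set.mem_singleton_iff]
    constructor
    · rintro (⟨h1, h2⟩ | ⟨h1, h2⟩)
      · exact Or.inl ⟨h1, h2⟩
      · exact Or.inr h1
    · rintro (⟨h1, h2⟩ | h1)
      · exact Or.inl ⟨h1, h2⟩
      · refine Or.inr ⟨h1, ?_⟩
        rw [Sym2.eq_iff] at h1
        rcases h1 with ⟨rfl, rfl⟩ | ⟨rfl, rfl⟩
        · exact hwu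
        · exact hwu.symm
  have hT'wleaf : ∀ x, T'.Adj w x → x = u := by
    intro x hx
    rw [hT'adj] at hx
    rcases hx with ⟨hx1, hx2⟩ | hx1
    · obtain rfl := hleaf x hx1
      exact absurd rfl hx2
    · rw [Sym2.eq_iff] at hx1
      rcases hx1 with ⟨-, rfl⟩ | ⟨h, -⟩
      · rfl
      · exact absurd h hwu
  have hT'adjwu : T'.Adj w u := by
    rw [hT'adj]; exact Or.inr rfl
  -- transferring walks avoiding w from T to T'
  have htrans : ∀ {x y : V} (p : T.Walk x y), w ∉ p.support →
      ∃ p' : T'.Walk x y, p'.length = p.length := by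
    intro x y p hws
    have he : ∀ e ∈ p.edges, e ∈ T'.edgeSet := by
      intro e hee
      induction e using Sym2.ind with
      | _ a b =>
        have hab : T.Adj a b := p.adj_of_mem_edges hee
        have haw : a ≠ w := fun h => hws (h ▸ p.fst_mem_support_of_mem_edges hee)
        have hbw : b ≠ w := fun h => hws (h ▸ p.snd_mem_support_of_mem_edges hee)
        rw [SimpleGraph.mem_edgeSet, hT'adj]
        refine Or.inl ⟨hab, ?_⟩
        intro hcon
        rw [Sym2.eq_iff] at hcon
        rcases hcon with ⟨h1, -⟩ | ⟨-, h2⟩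
        · exact haw h1
        · exact hbw h2
    exact ⟨p.transfer T' he, Walk.length_transfer p he⟩
  have hdist1 : ∀ x y : V, x ≠ w → y ≠ w → T'.dist x y ≤ T.dist x y := by
    intro x y hx hy
    obtain ⟨p, hp, hpl⟩ := hTc.exists_path_of_dist x y
    obtain ⟨p', hp'l⟩ := htrans p (leaf_not_mem_support hleaf p hp.isTrail hx hy)
    calc T'.dist x y ≤ p'.length := SimpleGraph.dist_le p'
      _ = p.length := hp'l
      _ = T.dist x y := hpl
  have hdist2 : ∀ y : V, y ≠ w → T'.dist w y ≤ 1 + T.dist u y := by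
    intro y hy
    obtain ⟨p, hp, hpl⟩ := hTc.exists_path_of_dist u y
    obtain ⟨p', hp'l⟩ := htrans p (leaf_not_mem_support hleaf p hp.isTrail hwu.symm hy)
    have := SimpleGraph.dist_le (Walk.cons hT'adjwu p')
    simp [Walk.length_cons, hp'l, hpl] at this
    omega
  -- T' is connected
  have hT'reach : ∀ x : V, T'.Reachable x u := by
    intro x
    by_cases hx : x = w
    · subst hx; exact hT'adjwu.reachable
    · obtain ⟨p, hp, _⟩ := hTc.exists_path_of_dist x u
      obtain ⟨p', _⟩ := htrans p (leaf_not_mem_support hleaf p hp.isTrail hx hwu.symm)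
      exact ⟨p'⟩
  have hT'conn : T'.Connected := by
    have : Nonempty V := ⟨u⟩
    exact ⟨fun a b => (hT'reach a).trans (hT'reach b).symm⟩
  -- T' is acyclic
  have hT'acyclic : T'.IsAcyclic := by
    intro a c hc
    by_cases hmem : w ∈ c.support
    · have hc' := hc.rotate hmem
      cases hrot : c.rotate w hmem with
      | nil => exact (hc.rotate hmem).ne_nil hrot
      | cons h1 p =>
        rename_i z
        rw [hrot] at hc'
        have hnd := hc'.isCircuit.isTrail.edges_nodup
        rw [Walk.edges_cons, List.nodup_cons] at hnd
        have hzu : z = u := hT'wleaf z h1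
        have hwz : w ≠ z := by rw [hzu]; exact hwu
        have hmem2 : s(w, u) ∈ p.edges := by
          have := leaf_first_edge hT'wleaf p.reverse hwz
          rwa [Walk.edges_reverse, List.mem_reverse] at this
        have hfst : s(w, z) = s(w, u) := by rw [hzu]
        exact hnd.1 (hfst.symm ▸ hmem2)
    · have he : ∀ e ∈ c.edges, e ∈ T.edgeSet := by
        intro e hee
        induction e using Sym2.ind with
        | _ a' b' =>
          have hab : T'.Adj a' b' := c.adj_of_mem_edges hee
          rw [hT'adj] at hab
          rcases hab with ⟨h1, -⟩ | h1
          · exact h1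
          · rw [Sym2.eq_iff] at h1
            rcases h1 with ⟨rfl, -⟩ | ⟨-, rfl⟩
            · exact absurd (c.fst_mem_support_of_mem_edges hee) hmem
            · exact absurd (c.snd_mem_support_of_mem_edges hee) hmem
      exact hT.IsAcyclic _ (hc.transfer he)
  have hT'tree : T'.IsTree := ⟨hT'conn, hT'acyclic⟩
  -- key lemma
  have key : ∀ n : ℕ, ∀ y : V, y ≠ w → G.dist w y = n → 1 + T.dist u y ≤ 3 * n := by
    intro n
    induction n with
    | zero =>
      intro y hy hd
      exact absurd (hGc.dist_eq_zero_iff.mp hd).symm hy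
    | succ n ih =>
      intro y hy hd
      rcases Nat.eq_zero_or_pos n with rfl | hn
      · -- base case : G.dist w y = 1
        have hTwy : T.dist w y ≤ 3 := by
          have := hspan w y; rw [hd] at this; omega
        suffices h : T.dist u y ≤ 2 by omega
        by_contra h3
        push_neg at h3
        have hvy : T.dist v y ≤ 2 := by
          rcases hcenter y with h | h
          · omega
          · exact h
        have hduv : T.dist u v = 1 := SimpleGraph.dist_eq_one_iff_adj.mpr hadj
        have htr1 : T.dist u y ≤ T.dist u v + T.dist v y := hTc.dist_triangle
        have hduy : T.dist u y = 3 := by omega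
        have hdvy : T.dist v y = 2 := by omega
        have hleafdist : T.dist w y = 1 + T.dist q y :=
          leaf_dist hTc hq hleaf hy
        have hduq : T.dist u q = 1 := SimpleGraph.dist_eq_one_iff_adj.mpr hq1
        have htr2 : T.dist u y ≤ T.dist u q + T.dist q y := hTc.dist_triangle
        have hdqy : T.dist q y = 2 := by omega
        obtain ⟨pv, hpv, hpvl⟩ := hTc.exists_path_of_dist v y
        obtain ⟨pq, hpq, hpql⟩ := hTc.exists_path_of_dist q y
        have hunv : u ∉ pv.support := by
          intro hm
          have hl1 := Walk.length_dropUntil_le pv hm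
          have hl2 : T.dist u y ≤ (pv.dropUntil u hm).length := SimpleGraph.dist_le _
          omega
        have hunq : u ∉ pq.support := by
          intro hm
          have hl1 := Walk.length_dropUntil_le pq hm
          have hl2 : T.dist u y ≤ (pq.dropUntil u hm).length := SimpleGraph.dist_le _
          omega
        have P1 : (Walk.cons hadj pv).IsPath := hpv.cons hunv
        have P2 : (Walk.cons hq1 pq).IsPath := hpq.cons hunq
        obtain ⟨r, hr, hur⟩ := hT.existsUnique_path u y
        have heq : Walk.cons hadj pv = Walk.cons hq1 pq := (hur _ P1).trans (hur _ P2).symm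
        have hveq : v = q := by
          have := congrArg (fun p => Walk.getVert p 1) heq
          simpa [Walk.getVert_cons_succ, Walk.getVert_zero] using this
        exact hvq hveq
      · -- inductive step
        obtain ⟨z, hzadj, hzd⟩ : ∃ z, G.Adj z y ∧ G.dist w z = n :=
          exists_adj_dist hGc hd
        have hzw : z ≠ w := by
          intro h; rw [h, SimpleGraph.dist_self] at hzd; omega
        have ihz := ih z hzw hzd
        have hzy1 : G.dist z y ≤ 1 := dist_le_one_of_adj hzadj
        have hzyT : T.dist z y ≤ 3 := by
          have := hspan z y; omega
        have htr : T.dist u y ≤ T.dist u z + T.dist z y := hTc.dist_triangle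
        omega
  -- assemble
  have hT'le : T' ≤ G := by
    intro a b hab
    rw [hT'adj] at hab
    rcases hab with ⟨h1, -⟩ | h1
    · exact hle h1
    · rw [Sym2.eq_iff] at h1
      rcases h1 with ⟨rfl, rfl⟩ | ⟨rfl, rfl⟩
      · exact hw.symm
      · exact hw
  have hspan' : ∀ x y : V, T'.dist x y ≤ 3 * G.dist x y := by
    have hhalf : ∀ y : V, y ≠ w → T'.dist w y ≤ 3 * G.dist w y := by
      intro y hy
      have h1 := hdist2 y hy
      have h2 := key (G.dist w y) y hy rfl
      omega
    intro x y
    by_cases hx : x = w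
    · by_cases hy : y = w
      · rw [hx, hy]; simp [SimpleGraph.dist_self]
      · rw [hx]; exact hhalf y hy
    · by_cases hy : y = w
      · rw [hy]
        calc T'.dist x w = T'.dist w x := SimpleGraph.dist_comm ..
          _ ≤ 3 * G.dist w x := hhalf x hx
          _ = 3 * G.dist x w := by rw [SimpleGraph.dist_comm]
      · exact le_trans (hdist1 x y hx hy) (hspan x y)
  have hT'uv : T'.Adj u v := by
    rw [hT'adj]
    refine Or.inl ⟨hadj, ?_⟩
    intro hcon
    rw [Sym2.eq_iff] at hcon
    rcases hcon with ⟨h1, -⟩ | ⟨-, h2⟩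
    · exact hwu h1.symm
    · exact hwv h2.symm
  refine ⟨hT'le, hT'tree, hspan', hT'uv, ?_⟩
  intro z
  by_cases hz : z = w
  · left
    rw [hz]
    have := dist_le_one_of_adj hT'adjwu.symm
    omega
  · rcases hcenter z with h | h
    · left; exact le_trans (hdist1 u z hwu.symm hz) h
    · right; exact le_trans (hdist1 v z hwv.symm hz) h
end

section
/- Let G be a finite simple graph of diameter at most 3 that admits a tree 3-spanner. Then G admits a tree 3-spanner of diameter at most 5. -/
namespace TreeSpannerAux

open SimpleGraph

variable {V : Type*}

noncomputable local instance : DecidableEq V := Classical.decEq V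

/-! ## Generic walk bounds -/

lemma exists_walk_getVert {G : SimpleGraph V} {x y : V} (p : G.Walk x y) (i : ℕ) :
    ∃ w : G.Walk x (p.getVert i), w.length ≤ i := by
  induction p generalizing i with
  | nil => exact ⟨SimpleGraph.Walk.nil, by simp⟩
  | @cons a b c h q ih =>
    cases i with
    | zero => exact ⟨SimpleGraph.Walk.nil, by show 0 ≤ 0; omega⟩
    | succ j =>
      obtain ⟨w, hw⟩ := ih j
      exact ⟨SimpleGraph.Walk.cons h w, by simp; omega⟩

lemma exists_walk_getVert' {G : SimpleGraph V} {x y : V} (p : G.Walk x y) (i : ℕ) :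
    ∃ w : G.Walk (p.getVert i) y, w.length ≤ p.length - i := by
  induction p generalizing i with
  | nil => exact ⟨SimpleGraph.Walk.nil, by simp⟩
  | @cons a b c h q ih =>
    cases i with
    | zero => exact ⟨SimpleGraph.Walk.cons h q, by show q.length + 1 ≤ q.length + 1 - 0; omega⟩
    | succ j =>
      obtain ⟨w, hw⟩ := ih j
      exact ⟨w, by simp; omega⟩

lemma exists_walk_getVert₂ {G : SimpleGraph V} {x y : V} (p : G.Walk x y) (i j : ℕ)
    (hij : i ≤ j) :
    ∃ w : G.Walk (p.getVert i) (p.getVert j), w.length ≤ j - i := by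
  induction p generalizing i j with
  | nil => exact ⟨SimpleGraph.Walk.nil, by simp⟩
  | @cons a b c h q ih =>
    cases i with
    | zero =>
      cases j with
      | zero => exact ⟨SimpleGraph.Walk.nil, by simp⟩
      | succ j' =>
        obtain ⟨w, hw⟩ := exists_walk_getVert q j'
        exact ⟨SimpleGraph.Walk.cons h w, by show w.length + 1 ≤ j' + 1 - 0; omega⟩
    | succ i' =>
      cases j with
      | zero => omega
      | succ j' =>
        obtain ⟨w, hw⟩ := ih i' j' (by omega)
        exact ⟨w, by show w.length ≤ j' + 1 - (i' + 1); omega⟩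

lemma dist_getVert_le {G : SimpleGraph V} {x y : V} (p : G.Walk x y) (i : ℕ) :
    G.dist x (p.getVert i) ≤ i :=
  (exists_walk_getVert p i).elim fun w hw => le_trans (SimpleGraph.dist_le w) hw

lemma dist_getVert_le' {G : SimpleGraph V} {x y : V} (p : G.Walk x y) (i : ℕ) :
    G.dist (p.getVert i) y ≤ p.length - i :=
  (exists_walk_getVert' p i).elim fun w hw => le_trans (SimpleGraph.dist_le w) hw

lemma dist_getVert_getVert_le {G : SimpleGraph V} {x y : V} (p : G.Walk x y) (i j : ℕ)
    (hij : i ≤ j) :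
    G.dist (p.getVert i) (p.getVert j) ≤ j - i :=
  (exists_walk_getVert₂ p i j hij).elim fun w hw => le_trans (SimpleGraph.dist_le w) hw

/-! ## Tree path basics -/

variable {T : SimpleGraph V}

noncomputable def tpath (hT : T.IsTree) (x y : V) : T.Walk x y :=
  (hT.isConnected.exists_path_of_dist x y).choose

lemma tpath_isPath (hT : T.IsTree) (x y : V) : (tpath hT x y).IsPath :=
  (hT.isConnected.exists_path_of_dist x y).choose_spec.1

lemma tpath_length (hT : T.IsTree) (x y : V) : (tpath hT x y).length = T.dist x y :=
  (hT.isConnected.exists_path_of_dist x y).choose_spec.2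

lemma eq_tpath (hT : T.IsTree) {x y : V} (p : T.Walk x y) (hp : p.IsPath) :
    p = tpath hT x y := by
  have := hT.IsAcyclic.path_unique ⟨p, hp⟩ ⟨tpath hT x y, tpath_isPath hT x y⟩
  exact congrArg Subtype.val this

/-- `w` lies on the tree path from `x` to `y`. -/
def onp (T : SimpleGraph V) (w x y : V) : Prop :=
  T.dist x w + T.dist w y = T.dist x y

lemma onp_symm {w x y : V} (h : onp T w x y) : onp T w y x := by
  unfold onp at *
  have e1 : T.dist y w = T.dist w y := SimpleGraph.dist_comm
  have e2 : T.dist w x = T.dist x w := SimpleGraph.dist_comm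
  have e3 : T.dist y x = T.dist x y := SimpleGraph.dist_comm
  omega

lemma onp_self (x y : V) : onp T x x y := by unfold onp; simp

lemma onp_end (x y : V) : onp T y x y := by unfold onp; simp

lemma onp_trans (hT : T.IsTree) {x y w w' : V} (h : onp T w x y) (h' : onp T w' x w) :
    onp T w' x y := by
  unfold onp at *
  have t1 := hT.isConnected.dist_triangle (u := x) (v := w') (w := y)
  have t2 := hT.isConnected.dist_triangle (u := w') (v := w) (w := y)
  omega

lemma onp_trans' (hT : T.IsTree) {x y w w' : V} (h : onp T w x y) (h' : onp T w' w y) :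
    onp T w' x y := by
  unfold onp at *
  have t1 := hT.isConnected.dist_triangle (u := x) (v := w') (w := y)
  have t2 := hT.isConnected.dist_triangle (u := x) (v := w) (w := w')
  omega

lemma dist_getVert_eq (hT : T.IsTree) {x y : V} {i : ℕ} (hi : i ≤ T.dist x y) :
    T.dist x ((tpath hT x y).getVert i) = i ∧
      T.dist ((tpath hT x y).getVert i) y = T.dist x y - i := by
  have h1 := dist_getVert_le (tpath hT x y) i
  have h2 := dist_getVert_le' (tpath hT x y) i
  rw [tpath_length hT x y] at h2
  have h3 := hT.isConnected.dist_triangle (u := x) (v := (tpath hT x y).getVert i) (w := y)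
  omega

lemma mem_tpath_onp (hT : T.IsTree) {x y w : V} (h : w ∈ (tpath hT x y).support) :
    onp T w x y := by
  rw [SimpleGraph.Walk.mem_support_iff_exists_getVert] at h
  obtain ⟨i, hi, hile⟩ := h
  rw [tpath_length hT x y] at hile
  obtain ⟨e1, e2⟩ := dist_getVert_eq hT (x := x) (y := y) hile
  rw [hi] at e1 e2
  unfold onp
  omega

lemma onp_mem_tpath (hT : T.IsTree) {x y w : V} (h : onp T w x y) :
    w ∈ (tpath hT x y).support := by
  classical
  have W := (tpath hT x w).append (tpath hT w y)
  have hlen : ((tpath hT x w).append (tpath hT w y)).length = T.dist x y := by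
    rw [SimpleGraph.Walk.length_append, tpath_length, tpath_length]; exact h
  have hp := SimpleGraph.Walk.isPath_of_length_eq_dist _ hlen
  have := eq_tpath hT _ hp
  rw [← this]
  rw [SimpleGraph.Walk.mem_support_append_iff]
  exact Or.inl (SimpleGraph.Walk.end_mem_support _)

lemma support_subset_walk (hT : T.IsTree) {x y : V} (W : T.Walk x y) :
    (tpath hT x y).support ⊆ W.support := by
  have h1 : (W.toPath : T.Walk x y) = tpath hT x y :=
    eq_tpath hT _ W.toPath.2
  rw [← h1]
  exact SimpleGraph.Walk.support_toPath_subset W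

lemma onp_cover (hT : T.IsTree) {x y w : V} (h : onp T w x y) (z : V) :
    onp T w x z ∨ onp T w z y := by
  have hmem := onp_mem_tpath hT h
  have hsub := support_subset_walk hT ((tpath hT x z).append (tpath hT z y))
  have := hsub hmem
  rw [SimpleGraph.Walk.mem_support_append_iff] at this
  rcases this with h' | h'
  · exact Or.inl (mem_tpath_onp hT h')
  · exact Or.inr (mem_tpath_onp hT h')

lemma onp_unique (hT : T.IsTree) {x y w w' : V} (h : onp T w x y) (h' : onp T w' x y)
    (hd : T.dist x w = T.dist x w') : w = w' := by
  have h1 := onp_mem_tpath hT h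
  have h2 := onp_mem_tpath hT h'
  rw [SimpleGraph.Walk.mem_support_iff_exists_getVert] at h1 h2
  obtain ⟨i, hi, hile⟩ := h1
  obtain ⟨j, hj, hjle⟩ := h2
  rw [tpath_length hT x y] at hile hjle
  have e1 := (dist_getVert_eq hT (x := x) (y := y) hile).1
  have e2 := (dist_getVert_eq hT (x := x) (y := y) hjle).1
  rw [hi] at e1; rw [hj] at e2
  have : i = j := by omega
  rw [← hi, ← hj, this]

lemma onp_suffix (hT : T.IsTree) {x y w w' : V} (h : onp T w x y) (h' : onp T w' x y)
    (hd : T.dist x w ≤ T.dist x w') : onp T w' w y := by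
  have h1 := onp_mem_tpath hT h
  have h2 := onp_mem_tpath hT h'
  rw [SimpleGraph.Walk.mem_support_iff_exists_getVert] at h1 h2
  obtain ⟨i, hi, hile⟩ := h1
  obtain ⟨j, hj, hjle⟩ := h2
  rw [tpath_length hT x y] at hile hjle
  have e1 := dist_getVert_eq hT (x := x) (y := y) hile
  have e2 := dist_getVert_eq hT (x := x) (y := y) hjle
  rw [hi] at e1; rw [hj] at e2
  have hij : i ≤ j := by omega
  -- distance between getVert i and getVert j is at most j - i
  have hle : T.dist w w' ≤ j - i := by
    rw [← hi, ← hj]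
    exact dist_getVert_getVert_le (tpath hT x y) i j hij
  have t1 := hT.isConnected.dist_triangle (u := w) (v := w') (w := y)
  unfold onp at *
  omega

lemma first_step (hT : T.IsTree) {x y : V} (hxy : x ≠ y) :
    ∃ m, T.Adj x m ∧ onp T m x y ∧ T.dist x m = 1 := by
  have hpos : 0 < T.dist x y := hT.isConnected.pos_dist_of_ne hxy
  have hlen : 0 < (tpath hT x y).length := by rw [tpath_length]; exact hpos
  refine ⟨(tpath hT x y).getVert 1, ?_, ?_, ?_⟩
  · have := (tpath hT x y).adj_getVert_succ (i := 0) hlen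
    simpa using this
  · exact mem_tpath_onp hT (SimpleGraph.Walk.mem_support_iff_exists_getVert.2
      ⟨1, rfl, by rw [tpath_length]; omega⟩)
  · exact (dist_getVert_eq hT (i := 1) hpos).1

lemma adj_dist_one {G : SimpleGraph V} {x y : V} (h : G.Adj x y) : G.dist x y = 1 :=
  SimpleGraph.dist_eq_one_iff_adj.2 h

lemma concat_dist (hT : T.IsTree) {a b z : V} (hab : T.Adj a b)
    (hb : b ∉ (tpath hT z a).support) : T.dist z b = T.dist z a + 1 := by
  have hp : ((tpath hT z a).concat hab).IsPath := by
    rw [← SimpleGraph.Walk.isPath_reverse_iff, SimpleGraph.Walk.reverse_concat]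
    rw [SimpleGraph.Walk.cons_isPath_iff]
    refine ⟨(tpath_isPath hT z a).reverse, ?_⟩
    rwa [SimpleGraph.Walk.support_reverse, List.mem_reverse]
  have := eq_tpath hT _ hp
  have hlen : ((tpath hT z a).concat hab).length = T.dist z a + 1 := by
    rw [SimpleGraph.Walk.length_concat, tpath_length]
  rw [this, tpath_length] at hlen
  exact hlen

lemma onp_dichot (hT : T.IsTree) {a b : V} (hab : T.Adj a b) (z : V) :
    T.dist z a = T.dist z b + 1 ∨ T.dist z b = T.dist z a + 1 := by
  by_cases hb : b ∈ (tpath hT z a).support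
  · left
    have := mem_tpath_onp hT hb
    unfold onp at this
    have h1 : T.dist b a = 1 := adj_dist_one hab.symm
    omega
  · exact Or.inr (concat_dist hT hab hb)

lemma onp_step (hT : T.IsTree) {a b z : V} (hab : T.Adj a b)
    (hd : T.dist z a = T.dist z b + 1) : onp T b z a := by
  by_cases hb : b ∈ (tpath hT z a).support
  · exact mem_tpath_onp hT hb
  · have := concat_dist hT hab hb
    omega

/-! ## Parent machinery (root `u`) -/

noncomputable def pr (hT : T.IsTree) (u x : V) : V := (tpath hT x u).getVert 1

lemma pr_spec (hT : T.IsTree) {u x : V} (hx : x ≠ u) :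
    T.Adj x (pr hT u x) ∧ onp T (pr hT u x) x u ∧ T.dist x (pr hT u x) = 1 ∧
      T.dist (pr hT u x) u + 1 = T.dist x u := by
  have hpos : 0 < T.dist x u := hT.isConnected.pos_dist_of_ne hx
  have hlen : 0 < (tpath hT x u).length := by rw [tpath_length]; exact hpos
  have hadj : T.Adj x (pr hT u x) := by
    have := (tpath hT x u).adj_getVert_succ (i := 0) hlen
    simpa [pr] using this
  have honp : onp T (pr hT u x) x u :=
    mem_tpath_onp hT (SimpleGraph.Walk.mem_support_iff_exists_getVert.2
      ⟨1, rfl, by rw [tpath_length]; omega⟩)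
  have hd1 : T.dist x (pr hT u x) = 1 := (dist_getVert_eq hT (i := 1) hpos).1
  refine ⟨hadj, honp, hd1, ?_⟩
  have := honp
  unfold onp at this
  omega

lemma pr_eq_of (hT : T.IsTree) {u x z : V} (hadj : T.Adj x z)
    (hd : T.dist z u + 1 = T.dist x u) : z = pr hT u x := by
  have hx : x ≠ u := by
    intro h; subst h
    simp [SimpleGraph.dist_self] at hd
  have h1 : T.dist u x = T.dist u z + 1 := by
    have e1 : T.dist u x = T.dist x u := SimpleGraph.dist_comm
    have e2 : T.dist u z = T.dist z u := SimpleGraph.dist_comm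
    omega
  have honp : onp T z u x := onp_step hT hadj h1
  have honp' : onp T z x u := onp_symm honp
  obtain ⟨_, honp2, hd1, _⟩ := pr_spec hT (u := u) hx
  exact onp_unique hT honp' honp2 (by rw [hd1]; exact adj_dist_one hadj)

lemma pr_dichot (hT : T.IsTree) {u x y : V} (hadj : T.Adj x y) :
    pr hT u x = y ∨ pr hT u y = x := by
  have e1 : T.dist u x = T.dist x u := SimpleGraph.dist_comm
  have e2 : T.dist u y = T.dist y u := SimpleGraph.dist_comm
  rcases onp_dichot hT hadj u with h | h
  · left; exact (pr_eq_of hT hadj (by omega)).symm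
  · right; exact (pr_eq_of hT hadj.symm (by omega)).symm

/-! ## Surgery -/

def patched (T : SimpleGraph V) (M : Set V) (pnew : V → V) : SimpleGraph V where
  Adj a b := (T.Adj a b ∧ a ∉ M ∧ b ∉ M)
    ∨ (a ∈ M ∧ b = pnew a ∧ a ≠ b) ∨ (b ∈ M ∧ a = pnew b ∧ a ≠ b)
  symm := by
    refine ⟨?_⟩
    intro a b h
    rcases h with ⟨h1, h2, h3⟩ | ⟨h1, h2, h3⟩ | ⟨h1, h2, h3⟩
    · exact Or.inl ⟨h1.symm, h3, h2⟩
    · exact Or.inr (Or.inr ⟨h1, h2, h3.symm⟩)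
    · exact Or.inr (Or.inl ⟨h1, h2, h3.symm⟩)
  loopless := by
    refine ⟨?_⟩
    intro a h
    rcases h with ⟨h1, _, _⟩ | ⟨_, _, h3⟩ | ⟨_, _, h3⟩
    · exact T.loopless.irrefl a h1
    · exact h3 rfl
    · exact h3 rfl

section Surgery

variable {G : SimpleGraph V} {M : Set V} {pnew : V → V} {u : V}

/-- x ∈ M is a pendant vertex: all its T-neighbours coincide. -/
def PendantHyp (T : SimpleGraph V) (M : Set V) : Prop :=
  ∀ x ∈ M, ∀ y y', T.Adj x y → T.Adj x y' → y = y'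

variable (hT : T.IsTree) (hTG : T ≤ G)

lemma patched_le (hTG : T ≤ G) (hGM : ∀ x ∈ M, G.Adj x (pnew x)) :
    patched T M pnew ≤ G := by
  intro a b hab
  rcases hab with ⟨h1, _, _⟩ | ⟨h1, h2, _⟩ | ⟨h1, h2, _⟩
  · exact hTG h1
  · rw [h2]; exact hGM a h1
  · rw [h2]; exact (hGM b h1).symm

lemma patched_adj_of_mem {x : V} (hx : x ∈ M) (hpM : ∀ x ∈ M, pnew x ∉ M)
    (hpx : pnew x ≠ x) {b : V} :
    (patched T M pnew).Adj x b ↔ b = pnew x := by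
  constructor
  · rintro (⟨_, h2, _⟩ | ⟨_, h2, _⟩ | ⟨h1, h2, _⟩)
    · exact absurd hx h2
    · exact h2
    · exact absurd (h2 ▸ hpM b h1) (by simp [hx])
  · rintro rfl
    exact Or.inr (Or.inl ⟨hx, rfl, (Ne.symm hpx)⟩)

lemma lift_walk {a b : V} (p : T.Walk a b) (hp : ∀ w ∈ p.support, w ∉ M) :
    ∃ w : (patched T M pnew).Walk a b, w.length = p.length := by
  induction p with
  | nil => exact ⟨SimpleGraph.Walk.nil, rfl⟩
  | @cons a c b h q ih =>
    obtain ⟨w, hw⟩ := ih (fun z hz => hp z (by simp [hz]))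
    have ha : a ∉ M := hp a (by simp)
    have hc : c ∉ M := hp c (by simp)
    exact ⟨SimpleGraph.Walk.cons (Or.inl ⟨h, ha, hc⟩) w, by show w.length + 1 = q.length + 1; omega⟩

lemma tpath_avoids (hT : T.IsTree) (hpd : PendantHyp T M)
    {a b : V} (ha : a ∉ M) (hb : b ∉ M) :
    ∀ w ∈ (tpath hT a b).support, w ∉ M := by
  intro w hw hwM
  rw [SimpleGraph.Walk.mem_support_iff_exists_getVert] at hw
  obtain ⟨i, hi, hile⟩ := hw
  subst hi
  rw [tpath_length] at hile
  have hi0 : i ≠ 0 := by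
    rintro rfl
    rw [SimpleGraph.Walk.getVert_zero] at hwM
    exact ha hwM
  have hilen : i ≠ T.dist a b := by
    rintro rfl
    rw [← tpath_length hT a b, SimpleGraph.Walk.getVert_length] at hwM
    exact hb hwM
  have hlt : i < T.dist a b := lt_of_le_of_ne hile hilen
  have hadj1 : T.Adj ((tpath hT a b).getVert (i - 1)) ((tpath hT a b).getVert i) := by
    have := (tpath hT a b).adj_getVert_succ (i := i - 1)
      (by rw [tpath_length]; omega)
    have he : i - 1 + 1 = i := by omega
    rwa [he] at this
  have hadj2 : T.Adj ((tpath hT a b).getVert i) ((tpath hT a b).getVert (i + 1)) :=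
    (tpath hT a b).adj_getVert_succ (by rw [tpath_length]; omega)
  have heq : (tpath hT a b).getVert (i - 1) = (tpath hT a b).getVert (i + 1) := by
    refine hpd _ hwM _ _ ?_ ?_
    · exact hadj1.symm
    · exact hadj2
  have e1 := (dist_getVert_eq hT (x := a) (y := b) (i := i - 1) (by omega)).1
  have e2 := (dist_getVert_eq hT (x := a) (y := b) (i := i + 1) (by omega)).1
  rw [heq] at e1
  omega

lemma patched_walk_of_not_mem (hT : T.IsTree) (hpd : PendantHyp T M)
    {a b : V} (ha : a ∉ M) (hb : b ∉ M) :
    ∃ w : (patched T M pnew).Walk a b, w.length = T.dist a b := by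
  obtain ⟨w, hw⟩ := lift_walk (pnew := pnew) (tpath hT a b) (tpath_avoids hT hpd ha hb)
  exact ⟨w, by rw [hw, tpath_length]⟩

lemma patched_dist_le (hT : T.IsTree) (hpd : PendantHyp T M)
    {a b : V} (ha : a ∉ M) (hb : b ∉ M) :
    (patched T M pnew).dist a b ≤ T.dist a b := by
  obtain ⟨w, hw⟩ := patched_walk_of_not_mem (pnew := pnew) hT hpd ha hb
  exact hw ▸ SimpleGraph.dist_le w

lemma patched_dist_le_mem (hT : T.IsTree) (hpd : PendantHyp T M)
    (hpM : ∀ x ∈ M, pnew x ∉ M) (hpG : ∀ x ∈ M, G.Adj x (pnew x))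
    {x b : V} (hx : x ∈ M) (hb : b ∉ M) :
    (patched T M pnew).dist x b ≤ 1 + T.dist (pnew x) b := by
  obtain ⟨w, hw⟩ := patched_walk_of_not_mem (pnew := pnew) hT hpd (hpM x hx) hb
  have hadj : (patched T M pnew).Adj x (pnew x) :=
    Or.inr (Or.inl ⟨hx, rfl, (hpG x hx).ne⟩)
  have := SimpleGraph.dist_le (SimpleGraph.Walk.cons hadj w)
  simpa [hw, Nat.add_comm] using this

lemma patched_dist_le_mem₂ (hT : T.IsTree) (hpd : PendantHyp T M)
    (hpM : ∀ x ∈ M, pnew x ∉ M) (hpG : ∀ x ∈ M, G.Adj x (pnew x))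
    {x y : V} (hx : x ∈ M) (hy : y ∈ M) :
    (patched T M pnew).dist x y ≤ 2 + T.dist (pnew x) (pnew y) := by
  by_cases hxy : x = y
  · subst hxy; simp [SimpleGraph.dist_self]
  obtain ⟨w, hw⟩ := patched_walk_of_not_mem (pnew := pnew) hT hpd (hpM x hx) (hpM y hy)
  have hadj1 : (patched T M pnew).Adj x (pnew x) :=
    Or.inr (Or.inl ⟨hx, rfl, (hpG x hx).ne⟩)
  have hadj2 : (patched T M pnew).Adj (pnew y) y :=
    Or.inr (Or.inr ⟨hy, rfl, (hpG y hy).ne'⟩)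
  have := SimpleGraph.dist_le ((SimpleGraph.Walk.cons hadj1 w).concat hadj2)
  rw [SimpleGraph.Walk.length_concat] at this
  simp only [SimpleGraph.Walk.length_cons] at this
  omega

lemma patched_connected (hT : T.IsTree) (hpd : PendantHyp T M)
    (hpM : ∀ x ∈ M, pnew x ∉ M) (hpG : ∀ x ∈ M, G.Adj x (pnew x)) :
    (patched T M pnew).Connected := by
  have hne : Nonempty V := hT.isConnected.nonempty
  rw [SimpleGraph.connected_iff]
  refine ⟨?_, hne⟩
  have reach : ∀ z : V, z ∉ M → ∀ z' : V, z' ∉ M →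
      (patched T M pnew).Reachable z z' := by
    intro z hz z' hz'
    obtain ⟨w, _⟩ := patched_walk_of_not_mem (pnew := pnew) hT hpd hz hz'
    exact ⟨w⟩
  intro x y
  have hx' : ∀ x : V, ∃ x₀, x₀ ∉ M ∧ (patched T M pnew).Reachable x x₀ := by
    intro x
    by_cases hx : x ∈ M
    · exact ⟨pnew x, hpM x hx, ⟨SimpleGraph.Walk.cons
        (Or.inr (Or.inl ⟨hx, rfl, (hpG x hx).ne⟩)) SimpleGraph.Walk.nil⟩⟩
    · exact ⟨x, hx, SimpleGraph.Reachable.refl x⟩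
  obtain ⟨x₀, hx₀, hrx⟩ := hx' x
  obtain ⟨y₀, hy₀, hry⟩ := hx' y
  exact hrx.trans ((reach x₀ hx₀ y₀ hy₀).trans hry.symm)

lemma patched_isTree (hT : T.IsTree) (hpd : PendantHyp T M)
    (hpM : ∀ x ∈ M, pnew x ∉ M) (hpG : ∀ x ∈ M, G.Adj x (pnew x)) :
    (patched T M pnew).IsTree := by
  refine ⟨patched_connected (G := G) hT hpd hpM hpG, ?_⟩
  intro x W hW
  by_cases hM : ∀ w ∈ W.support, w ∉ M
  · -- transfer the cycle to T
    have hedges : ∀ e ∈ W.edges, e ∈ T.edgeSet := by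
      intro e he
      induction e with
      | h a b =>
        have ha := W.fst_mem_support_of_mem_edges he
        have hb := W.snd_mem_support_of_mem_edges he
        have := W.adj_of_mem_edges he
        rcases this with ⟨h1, _, _⟩ | ⟨h1, h2, _⟩ | ⟨h1, h2, _⟩
        · exact h1
        · exact absurd h1 (hM a ha)
        · exact absurd h1 (hM b hb)
    exact hT.IsAcyclic (W.transfer T hedges) (hW.transfer hedges)
  · push_neg at hM
    obtain ⟨m, hm, hmM⟩ := hM
    have hW' := hW.rotate hm
    set W' := W.rotate m hm with hW'def
    have hnn : ¬ W'.Nil := hW'.not_nil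
    rw [SimpleGraph.Walk.not_nil_iff] at hnn
    obtain ⟨b1, hadj1, q, hq⟩ := hnn
    have hb1 : b1 = pnew m :=
      (patched_adj_of_mem hmM hpM (hpG m hmM).ne').1 hadj1
    have h3 := hW'.three_le_length
    rw [hq] at h3
    simp only [SimpleGraph.Walk.length_cons] at h3
    have hqnn : ¬ q.reverse.Nil := by
      rw [SimpleGraph.Walk.not_nil_iff_lt_length, SimpleGraph.Walk.length_reverse]
      omega
    rw [SimpleGraph.Walk.not_nil_iff] at hqnn
    obtain ⟨b2, hadj2, q2, hq2⟩ := hqnn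
    have hb2 : b2 = pnew m :=
      (patched_adj_of_mem hmM hpM (hpG m hmM).ne').1 hadj2
    have hmem : s(m, b2) ∈ q.edges := by
      have : s(m, b2) ∈ q.reverse.edges := by rw [hq2]; simp
      rwa [SimpleGraph.Walk.edges_reverse, List.mem_reverse] at this
    rw [hq, SimpleGraph.Walk.cons_isCycle_iff] at hW'
    exact hW'.2 (by rwa [hb2, ← hb1] at hmem)

end Surgery

/-! ## Spanner reduction to edges -/

lemma spanner_of_edges {G T' : SimpleGraph V} (hC : T'.Connected) (hG : G.Connected)
    (hE : ∀ a b : V, G.Adj a b → T'.dist a b ≤ 3) :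
    ∀ x y : V, T'.dist x y ≤ 3 * G.dist x y := by
  have aux : ∀ {x y : V} (W : G.Walk x y), T'.dist x y ≤ 3 * W.length := by
    intro x y W
    induction W with
    | nil => simp
    | @cons a c b h q ih =>
      have t := hC.dist_triangle (u := a) (v := c) (w := b)
      have := hE a c h
      simp only [SimpleGraph.Walk.length_cons]
      omega
  intro x y
  obtain ⟨W, hW⟩ := hG.exists_walk_length_eq_dist x y
  have := aux W
  rwa [hW] at this

/-! ## Short G-paths -/

lemma gpath_cases {G : SimpleGraph V} (hG : G.Connected)
    (hdiam : ∀ x y : V, G.dist x y ≤ 3) {x z : V} (hxz : x ≠ z) :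
    G.Adj x z ∨ (∃ m, G.Adj x m ∧ G.Adj m z)
      ∨ (∃ b1 b2, G.Adj x b1 ∧ G.Adj b1 b2 ∧ G.Adj b2 z) := by
  obtain ⟨W, hW⟩ := hG.exists_walk_length_eq_dist x z
  have hlen : W.length ≤ 3 := by rw [hW]; exact hdiam x z
  cases W with
  | nil => exact absurd rfl hxz
  | cons h q =>
    cases q with
    | nil => exact Or.inl h
    | cons h2 q2 =>
      cases q2 with
      | nil => exact Or.inr (Or.inl ⟨_, h, h2⟩)
      | cons h3 q3 =>
        cases q3 with
        | nil => exact Or.inr (Or.inr ⟨_, _, h, h2, h3⟩)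
        | cons h4 q4 => simp only [SimpleGraph.Walk.length_cons] at hlen; omega

/-! ## Depth machinery for the step -/

noncomputable def dp (T : SimpleGraph V) (u v z : V) : ℕ := min (T.dist z u) (T.dist z v)

section Step

variable {u v : V}

lemma dp_eq_zero_iff (hT : T.IsTree) {z : V} (hz : dp T u v z = 0) : z = u ∨ z = v := by
  unfold dp at hz
  rcases Nat.min_eq_zero_iff.1 hz with h | h
  · exact Or.inl ((hT.isConnected.dist_eq_zero_iff).1 h)
  · exact Or.inr ((hT.isConnected.dist_eq_zero_iff).1 h)

lemma pr_self (hT : T.IsTree) : pr hT u u = u := by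
  unfold pr
  apply SimpleGraph.Walk.getVert_of_length_le
  rw [tpath_length]
  simp [SimpleGraph.dist_self]

lemma pr_v (hT : T.IsTree) (hadj : T.Adj u v) : pr hT u v = u := by
  obtain ⟨_, _, _, hdec⟩ := pr_spec hT (u := u) hadj.ne'
  have h1 : T.dist v u = 1 := adj_dist_one hadj.symm
  have h0 : T.dist (pr hT u v) u = 0 := by omega
  exact (hT.isConnected.dist_eq_zero_iff).1 h0

lemma dist_u_dp (hT : T.IsTree) (he : u = v ∨ T.Adj u v) (z : V) :
    T.dist z u = dp T u v z ∨ T.dist z u = dp T u v z + 1 := by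
  unfold dp
  rcases he with rfl | hadj
  · simp
  · rcases onp_dichot hT hadj z with h | h <;> omega

lemma dp_par (hT : T.IsTree) (he : u = v ∨ T.Adj u v) {z : V} (hz : 1 ≤ dp T u v z) :
    dp T u v (pr hT u z) + 1 = dp T u v z := by
  have hzu : z ≠ u := by
    intro h; subst h; unfold dp at hz; simp [SimpleGraph.dist_self] at hz
  obtain ⟨hadjq, honpq, hd1, hdec⟩ := pr_spec hT (u := u) hzu
  rcases he with rfl | hadj
  · unfold dp at *
    simp only [min_self] at *
    omega
  · rcases onp_dichot hT hadj z with h | h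
    · -- v-side : T.dist z u = T.dist z v + 1
      have honpv : onp T v z u := onp_step hT hadj h
      have hzv1 : 1 ≤ T.dist z v := by unfold dp at hz; omega
      have hsuf : onp T v (pr hT u z) u := onp_suffix hT honpq honpv (by omega)
      have hduv : T.dist v u = 1 := adj_dist_one hadj.symm
      unfold onp at hsuf honpv
      unfold dp at *
      omega
    · -- u-side : T.dist z v = T.dist z u + 1
      have htr := hT.isConnected.dist_triangle (u := z) (v := pr hT u z) (w := v)
      have htr2 := hT.isConnected.dist_triangle (u := pr hT u z) (v := z) (w := v)
      have e1 : T.dist (pr hT u z) z = T.dist z (pr hT u z) := SimpleGraph.dist_comm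
      unfold dp at *
      omega

lemma pr_back (hT : T.IsTree) (he : u = v ∨ T.Adj u v) {y w : V} (hy : pr hT u y = w)
    (hw : 1 ≤ dp T u v w) : dp T u v y = dp T u v w + 1 := by
  have hyu : y ≠ u := by
    rintro rfl
    rw [pr_self] at hy
    subst hy
    unfold dp at hw; simp [SimpleGraph.dist_self] at hw
  have hyv : y ≠ v := by
    rintro rfl
    rcases he with rfl | hadj
    · rw [pr_self] at hy; subst hy
      unfold dp at hw; simp [SimpleGraph.dist_self] at hw
    · rw [pr_v hT hadj] at hy; subst hy
      unfold dp at hw; simp [SimpleGraph.dist_self] at hw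
  have h1 : 1 ≤ dp T u v y := by
    rcases Nat.eq_zero_or_pos (dp T u v y) with h | h
    · rcases dp_eq_zero_iff (u := u) (v := v) hT h with rfl | rfl
      · exact absurd rfl hyu
      · exact absurd rfl hyv
    · exact h
  have := dp_par hT he h1
  rw [hy] at this
  omega

lemma deep_unique_nbr (hT : T.IsTree) (he : u = v ∨ T.Adj u v) {K : ℕ} (hK : 3 ≤ K)
    (hcov : ∀ z : V, dp T u v z ≤ K) {z : V} (hz : dp T u v z = K) :
    ∀ y, T.Adj z y → y = pr hT u z := by
  intro y hadj
  rcases pr_dichot hT (u := u) hadj with h | h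
  · exact h.symm
  · have := pr_back hT he h (by omega)
    have := hcov y
    omega

lemma deep_step (hT : T.IsTree) (he : u = v ∨ T.Adj u v) {K : ℕ} (hK : 3 ≤ K)
    (hcov : ∀ z : V, dp T u v z ≤ K) {z : V} (hz : dp T u v z = K)
    {y : V} (hyz : y ≠ z) : T.dist z y = 1 + T.dist (pr hT u z) y := by
  obtain ⟨m, hadj, honp, hd1⟩ := first_step hT (Ne.symm hyz)
  have hm := deep_unique_nbr hT he hK hcov hz m hadj
  subst hm
  unfold onp at honp
  omega

lemma dp_u (hT : T.IsTree) : dp T u v u = 0 := by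
  unfold dp; simp [SimpleGraph.dist_self]

lemma ne_u_of_dp {z : V} (hT : T.IsTree) (h : dp T u v z ≠ 0) : z ≠ u := by
  rintro rfl; exact h (dp_u hT)

lemma step1 (hT : T.IsTree) (he : u = v ∨ T.Adj u v) {z : V} (hz : 1 ≤ dp T u v z) :
    T.Adj z (pr hT u z) ∧ onp T (pr hT u z) z u ∧ T.dist z (pr hT u z) = 1 ∧
      dp T u v (pr hT u z) + 1 = dp T u v z := by
  have hzu : z ≠ u := ne_u_of_dp (u := u) (v := v) hT (by omega)
  obtain ⟨h1, h2, h3, _⟩ := pr_spec hT hzu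
  exact ⟨h1, h2, h3, dp_par hT he hz⟩

lemma ball (hT : T.IsTree) (he : u = v ∨ T.Adj u v) {K : ℕ} (hK : 3 ≤ K)
    (hcov : ∀ z : V, dp T u v z ≤ K) {z y : V}
    (hz : dp T u v z = K) (hyz : y ≠ z) (hy3 : T.dist z y ≤ 3) :
    y = pr hT u z ∨ y = pr hT u (pr hT u z) ∨ y = pr hT u (pr hT u (pr hT u z)) ∨
      pr hT u y = pr hT u z ∨ pr hT u y = pr hT u (pr hT u z) := by
  obtain ⟨hadq, honq, hd1q, hdpq⟩ := step1 hT he (z := z) (by rw [hz]; omega)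
  set q := pr hT u z with hqdef
  obtain ⟨hadg, hong, hd1g, hdpg⟩ := step1 hT he (z := q) (by omega)
  set g := pr hT u q with hgdef
  have hqy : T.dist q y ≤ 2 := by
    have := deep_step hT he hK hcov hz hyz
    rw [← hqdef] at this
    omega
  have hcases : T.dist q y = 0 ∨ T.dist q y = 1 ∨ T.dist q y = 2 := by omega
  rcases hcases with h0 | h1 | h2
  · exact Or.inl ((hT.isConnected.dist_eq_zero_iff.1 h0).symm)
  · have hadj : T.Adj q y := SimpleGraph.dist_eq_one_iff_adj.1 h1
    rcases pr_dichot hT (u := u) hadj with h | h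
    · exact Or.inr (Or.inl h.symm)
    · exact Or.inr (Or.inr (Or.inr (Or.inl h)))
  · have hqy0 : q ≠ y := by
      intro hqy; rw [hqy] at h2; simp [SimpleGraph.dist_self] at h2
    obtain ⟨m, hadm, honm, hd1m⟩ := first_step hT hqy0
    have hdm : T.dist m y = 1 := by unfold onp at honm; omega
    have hadmy : T.Adj m y := SimpleGraph.dist_eq_one_iff_adj.1 hdm
    rcases pr_dichot hT (u := u) hadm with hqm | hmq
    · -- m = pr q = g
      rcases pr_dichot hT (u := u) hadmy with hmy | hym
      · exact Or.inr (Or.inr (Or.inl (by rw [← hmy, ← hqm])))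
      · exact Or.inr (Or.inr (Or.inr (Or.inr (by rw [hym, ← hqm]))))
    · -- pr m = q
      have hdpm : dp T u v m = K := by
        have := pr_back hT he hmq (by omega)
        omega
      rcases pr_dichot hT (u := u) hadmy with hmy | hym
      · -- y = pr m = q : contradiction with dist q y = 2
        rw [hmq] at hmy
        rw [← hmy] at h2
        simp [SimpleGraph.dist_self] at h2
      · -- pr y = m : too deep
        have := pr_back hT he hym (by omega)
        have := hcov y
        omega

lemma sibling (hT : T.IsTree) (he : u = v ∨ T.Adj u v) {K : ℕ} (hK : 3 ≤ K)
    (hcov : ∀ z : V, dp T u v z ≤ K) {a b : V}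
    (ha : dp T u v a = K) (hb : dp T u v b = K) (hab : a ≠ b)
    (h3 : T.dist a b ≤ 3) : pr hT u a = pr hT u b := by
  obtain ⟨_, _, _, hdpa⟩ := step1 hT he (z := a) (by omega)
  obtain ⟨_, _, _, hdpb⟩ := step1 hT he (z := b) (by omega)
  have hqb : pr hT u a ≠ b := by
    intro h; rw [h] at hdpa; omega
  have e1 := deep_step hT he hK hcov ha (Ne.symm hab)
  have e2 := deep_step hT he hK hcov hb hqb
  have e3 : T.dist (pr hT u a) b = T.dist b (pr hT u a) := SimpleGraph.dist_comm
  have hqq : T.dist (pr hT u b) (pr hT u a) ≤ 1 := by omega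
  rcases Nat.eq_zero_or_pos (T.dist (pr hT u b) (pr hT u a)) with h0 | hpos
  · exact (hT.isConnected.dist_eq_zero_iff.1 h0).symm
  · have h1 : T.dist (pr hT u b) (pr hT u a) = 1 := by omega
    have hadj : T.Adj (pr hT u b) (pr hT u a) := SimpleGraph.dist_eq_one_iff_adj.1 h1
    rcases pr_dichot hT (u := u) hadj with h | h
    · have := pr_back hT he h (by omega)
      omega
    · have := pr_back hT he h (by omega)
      omega

lemma two_le_g_dist (hT : T.IsTree) (he : u = v ∨ T.Adj u v) {K : ℕ} (hK : 3 ≤ K)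
    {gx gz : V} (hgx : dp T u v gx = K - 2) (hgz : dp T u v gz = K - 2)
    (hne : gx ≠ gz) (hle : T.dist gx gz ≤ 1) : False := by
  rcases Nat.eq_zero_or_pos (T.dist gx gz) with h0 | hpos
  · exact hne (hT.isConnected.dist_eq_zero_iff.1 h0)
  · have h1 : T.dist gx gz = 1 := by omega
    have hadj : T.Adj gx gz := SimpleGraph.dist_eq_one_iff_adj.1 h1
    rcases pr_dichot hT (u := u) hadj with h | h
    · have := pr_back hT he h (by omega)
      omega
    · have := pr_back hT he h (by omega)
      omega

lemma disj (hT : T.IsTree) (he : u = v ∨ T.Adj u v) {K : ℕ} (hK : 3 ≤ K)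
    {gx gz m : V} (hgx : dp T u v gx = K - 2) (hgz : dp T u v gz = K - 2)
    (hne : gx ≠ gz) (h1 : onp T gx m u) (h2 : onp T gz m u) : False := by
  have du1 := dist_u_dp hT he gx
  have du2 := dist_u_dp hT he gz
  have key : T.dist gx gz ≤ 1 := by
    rcases le_total (T.dist m gx) (T.dist m gz) with hle | hle
    · have := onp_suffix hT h1 h2 hle
      unfold onp at this h1 h2
      omega
    · have := onp_suffix hT h2 h1 hle
      have hcomm : T.dist gz gx = T.dist gx gz := SimpleGraph.dist_comm
      unfold onp at this h1 h2
      omega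
  exact two_le_g_dist hT he hK hgx hgz hne key

lemma stuck_nbrs {G : SimpleGraph V} (hT : T.IsTree) (he : u = v ∨ T.Adj u v) {K : ℕ}
    (hK : 3 ≤ K) (hcov : ∀ z : V, dp T u v z ≤ K)
    (hTe : ∀ a b : V, G.Adj a b → T.dist a b ≤ 3) {x : V}
    (hx : dp T u v x = K) (hxg : ¬ G.Adj x (pr hT u (pr hT u x)))
    (hxh : ¬ G.Adj x (pr hT u (pr hT u (pr hT u x)))) :
    ∀ y : V, G.Adj x y → onp T (pr hT u (pr hT u x)) y u ∧ pr hT u (pr hT u x) ≠ y ∧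
      T.dist y (pr hT u (pr hT u x)) ≤ 2 ∧ K - 1 ≤ dp T u v y := by
  intro y hGxy
  obtain ⟨hadq, honq, hd1q, hdpq⟩ := step1 hT he (z := x) (by rw [hx]; omega)
  obtain ⟨hadg, hong, hd1g, hdpg⟩ := step1 hT he (z := pr hT u x) (by omega)
  have h3 : T.dist x y ≤ 3 := hTe x y hGxy
  rcases ball hT he hK hcov hx hGxy.ne' h3 with h | h | h | hq | hg2
  · -- y = q
    subst h
    exact ⟨hong, by intro hgq; have := congrArg (dp T u v) hgq; omega, by omega, by omega⟩
  · -- y = g : contradiction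
    exact absurd (h ▸ hGxy) hxg
  · -- y = h : contradiction
    exact absurd (h ▸ hGxy) hxh
  · -- pr y = q
    have hdpy : dp T u v y = K := by
      have := pr_back hT he hq (by omega)
      omega
    obtain ⟨hady, hony, hd1y, _⟩ := step1 hT he (z := y) (by rw [hdpy]; omega)
    rw [hq] at hony hd1y
    refine ⟨onp_trans' hT hony hong, ?_, ?_, by omega⟩
    · intro hgy; have := congrArg (dp T u v) hgy; omega
    · have tr := hT.isConnected.dist_triangle (u := y) (v := pr hT u x)
        (w := pr hT u (pr hT u x))
      omega
  · -- pr y = g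
    have hdpy : dp T u v y = K - 1 := by
      have := pr_back hT he hg2 (by omega)
      omega
    obtain ⟨hady, hony, hd1y, _⟩ := step1 hT he (z := y) (by rw [hdpy]; omega)
    rw [hg2] at hony hd1y
    refine ⟨hony, ?_, by omega, by omega⟩
    intro hgy; have := congrArg (dp T u v) hgy; omega

lemma conf {G : SimpleGraph V} (hG : G.Connected)
    (hdiam : ∀ x y : V, G.dist x y ≤ 3) (hT : T.IsTree) (he : u = v ∨ T.Adj u v)
    {K : ℕ} (hK : 3 ≤ K) (hcov : ∀ z : V, dp T u v z ≤ K)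
    (hTe : ∀ a b : V, G.Adj a b → T.dist a b ≤ 3) {x z : V}
    (hx : dp T u v x = K) (hxg : ¬ G.Adj x (pr hT u (pr hT u x)))
    (hxh : ¬ G.Adj x (pr hT u (pr hT u (pr hT u x))))
    (hz : dp T u v z = K) (hzg : ¬ G.Adj z (pr hT u (pr hT u z)))
    (hzh : ¬ G.Adj z (pr hT u (pr hT u (pr hT u z))))
    (hgg : pr hT u (pr hT u x) ≠ pr hT u (pr hT u z)) : False := by
  obtain ⟨hadqx, honqx, hd1qx, hdpqx⟩ := step1 hT he (z := x) (by omega)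
  obtain ⟨hadgx, hongx, hd1gx, hdpgx⟩ := step1 hT he (z := pr hT u x) (by omega)
  obtain ⟨hadqz, honqz, hd1qz, hdpqz⟩ := step1 hT he (z := z) (by omega)
  obtain ⟨hadgz, hongz, hd1gz, hdpgz⟩ := step1 hT he (z := pr hT u z) (by omega)
  have hxz : x ≠ z := by
    intro hxzeq; rw [hxzeq] at hgg; exact hgg rfl
  rcases gpath_cases hG hdiam hxz with hadj | ⟨m, hm1, hm2⟩ | ⟨b1, b2, hb1, hb12, hb2⟩
  · -- direct G-edge
    rcases ball hT he hK hcov hx hadj.ne' (hTe x z hadj) with h | h | h | h | h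
    · rw [h] at hz; omega
    · exact hxg (h ▸ hadj)
    · exact hxh (h ▸ hadj)
    · exact hgg (by rw [h])
    · have := pr_back hT he h (by omega)
      omega
  · obtain ⟨o1, _, _, _⟩ := stuck_nbrs hT he hK hcov hTe hx hxg hxh m hm1
    obtain ⟨o2, _, _, _⟩ := stuck_nbrs hT he hK hcov hTe hz hzg hzh m hm2.symm
    exact disj hT he hK (by omega) (by omega) hgg o1 o2
  · obtain ⟨o1, ne1, dle1, _⟩ := stuck_nbrs hT he hK hcov hTe hx hxg hxh b1 hb1
    obtain ⟨o2, ne2, dle2, _⟩ := stuck_nbrs hT he hK hcov hTe hz hzg hzh b2 hb2.symm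
    have hTb : T.dist b1 b2 ≤ 3 := hTe b1 b2 hb12
    have hnot1 : ¬ onp T (pr hT u (pr hT u x)) b2 u := fun h =>
      disj hT he hK (by omega) (by omega) hgg h o2
    have hsep1 : onp T (pr hT u (pr hT u x)) b1 b2 := by
      rcases onp_cover hT o1 b2 with h | h
      · exact h
      · exact absurd h hnot1
    have hnot2 : ¬ onp T (pr hT u (pr hT u z)) (pr hT u (pr hT u x)) u := fun h =>
      disj hT he hK (by omega) (by omega) hgg (onp_self _ _) h
    have hsep2 : onp T (pr hT u (pr hT u z)) b2 (pr hT u (pr hT u x)) := by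
      rcases onp_cover hT o2 (pr hT u (pr hT u x)) with h | h
      · exact h
      · exact absurd h hnot2
    have hgdist : ¬ (T.dist (pr hT u (pr hT u x)) (pr hT u (pr hT u z)) ≤ 1) := fun hle =>
      two_le_g_dist hT he hK (by omega) (by omega) hgg hle
    have d1pos : 1 ≤ T.dist b1 (pr hT u (pr hT u x)) :=
      hT.isConnected.pos_dist_of_ne (by intro hh; exact ne1 hh.symm)
    have d2pos : 1 ≤ T.dist b2 (pr hT u (pr hT u z)) :=
      hT.isConnected.pos_dist_of_ne (by intro hh; exact ne2 hh.symm)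
    unfold onp at hsep1 hsep2
    have c1 : T.dist b1 (pr hT u (pr hT u x)) =
        T.dist (pr hT u (pr hT u x)) b1 := SimpleGraph.dist_comm
    have c2 : T.dist b2 (pr hT u (pr hT u z)) =
        T.dist (pr hT u (pr hT u z)) b2 := SimpleGraph.dist_comm
    have c3 : T.dist b2 (pr hT u (pr hT u x)) =
        T.dist (pr hT u (pr hT u x)) b2 := SimpleGraph.dist_comm
    have c4 : T.dist (pr hT u (pr hT u z)) (pr hT u (pr hT u x)) =
        T.dist (pr hT u (pr hT u x)) (pr hT u (pr hT u z)) := SimpleGraph.dist_comm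
    omega

end Step

/-! ## The main surgery step -/

lemma dp_v {u v : V} (hT : T.IsTree) : dp T u v v = 0 := by
  unfold dp; simp [SimpleGraph.dist_self]

lemma step_core {G T : SimpleGraph V} (hG : G.Connected)
    (hdiam : ∀ x y : V, G.dist x y ≤ 3) (hTG : T ≤ G) (hT : T.IsTree)
    (hsp : ∀ x y : V, T.dist x y ≤ 3 * G.dist x y)
    (u v : V) (e : ℕ) (he : (e = 0 ∧ u = v) ∨ (e = 1 ∧ T.Adj u v))
    (K : ℕ) (hK : 3 ≤ K) (hcov : ∀ z : V, dp T u v z ≤ K)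
    (g₀ : V) (hg₀ : dp T u v g₀ = K - 2)
    (hmov : ∀ z : V, dp T u v z = K → pr hT u (pr hT u z) ≠ g₀ →
      G.Adj z (pr hT u (pr hT u z)) ∨ G.Adj z (pr hT u (pr hT u (pr hT u z)))) :
    ∃ T' : SimpleGraph V, T' ≤ G ∧ T'.IsTree ∧
      (∀ x y : V, T'.dist x y ≤ 3 * G.dist x y) ∧
      (∀ x y : V, T'.dist x y ≤ 2 * K - 1 + e) := by
  classical
  have he' : u = v ∨ T.Adj u v := he.elim (fun h => Or.inl h.2) (fun h => Or.inr h.2)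
  have hTe : ∀ a b : V, G.Adj a b → T.dist a b ≤ 3 := by
    intro a b hab
    have h1 := hsp a b
    rw [adj_dist_one hab] at h1
    omega
  have hduv : T.dist u v ≤ e := by
    rcases he with ⟨rfl, rfl⟩ | ⟨rfl, hadj⟩
    · simp [SimpleGraph.dist_self]
    · rw [adj_dist_one hadj]
  have anch : ∀ z : V, ∃ s, (s = u ∨ s = v) ∧ T.dist z s = dp T u v z := by
    intro z
    rcases le_total (T.dist z u) (T.dist z v) with h | h
    · exact ⟨u, Or.inl rfl, by unfold dp; omega⟩
    · exact ⟨v, Or.inr rfl, by unfold dp; omega⟩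
  have hsnotM : ∀ s : V, (s = u ∨ s = v) → dp T u v s = 0 := by
    rintro s (rfl | rfl)
    · exact dp_u hT
    · exact dp_v hT
  -- the moved set and new parents
  set M : Set V := {z | dp T u v z = K ∧ pr hT u (pr hT u z) ≠ g₀} with hM
  set pw : V → V := fun z => if G.Adj z (pr hT u (pr hT u z)) then pr hT u (pr hT u z)
      else pr hT u (pr hT u (pr hT u z)) with hpw
  have hMdeep : ∀ z ∈ M, dp T u v z = K := fun z hz => hz.1
  -- chains for deep vertices
  have chainq : ∀ z : V, dp T u v z = K → T.Adj z (pr hT u z) ∧ onp T (pr hT u z) z u ∧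
      T.dist z (pr hT u z) = 1 ∧ dp T u v (pr hT u z) + 1 = dp T u v z :=
    fun z hz => step1 hT he' (by rw [hz]; omega)
  have chaing : ∀ z : V, dp T u v z = K →
      T.Adj (pr hT u z) (pr hT u (pr hT u z)) ∧
      onp T (pr hT u (pr hT u z)) (pr hT u z) u ∧
      T.dist (pr hT u z) (pr hT u (pr hT u z)) = 1 ∧
      dp T u v (pr hT u (pr hT u z)) + 2 = dp T u v z := by
    intro z hz
    obtain ⟨_, _, _, h4⟩ := chainq z hz
    obtain ⟨a1, a2, a3, a4⟩ := step1 hT he' (z := pr hT u z) (by omega)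
    exact ⟨a1, a2, a3, by omega⟩
  have chainh : ∀ z : V, dp T u v z = K →
      T.Adj (pr hT u (pr hT u z)) (pr hT u (pr hT u (pr hT u z))) ∧
      T.dist (pr hT u (pr hT u z)) (pr hT u (pr hT u (pr hT u z))) = 1 ∧
      dp T u v (pr hT u (pr hT u (pr hT u z))) + 3 = dp T u v z := by
    intro z hz
    obtain ⟨_, _, _, h4⟩ := chaing z hz
    obtain ⟨a1, a2, a3, a4⟩ := step1 hT he' (z := pr hT u (pr hT u z)) (by omega)
    exact ⟨a1, a3, by omega⟩
  have hpwAdj : ∀ z ∈ M, G.Adj z (pw z) := by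
    intro z hz
    rw [hpw]
    by_cases hAdj : G.Adj z (pr hT u (pr hT u z))
    · simpa [hAdj] using hAdj
    · rcases hmov z hz.1 hz.2 with h | h
      · exact absurd h hAdj
      · simpa [hAdj] using h
  have hpwdp : ∀ z ∈ M, dp T u v (pw z) ≤ K - 2 := by
    intro z hz
    have hzK : dp T u v z = K := hz.1
    obtain ⟨_, _, hg4⟩ := chaing z hzK
    obtain ⟨_, _, hh3⟩ := chainh z hzK
    rw [hpw]
    by_cases hAdj : G.Adj z (pr hT u (pr hT u z)) <;> simp only [hAdj, if_true,
      if_false, Bool.false_eq_true, ite_true, ite_false] <;> omega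
  have hpM : ∀ z ∈ M, pw z ∉ M := by
    intro z hz hmem
    have h1 := hMdeep _ hmem
    have h2 := hpwdp z hz
    omega
  have hpend : PendantHyp T M := by
    intro x hx y y' hy hy'
    rw [deep_unique_nbr hT he' hK hcov hx.1 y hy,
      deep_unique_nbr hT he' hK hcov hx.1 y' hy']
  have hle : patched T M pw ≤ G := patched_le hTG hpwAdj
  have htree : (patched T M pw).IsTree := patched_isTree (G := G) hT hpend hpM hpwAdj
  have hconn := htree.isConnected
  -- edge bound
  have aux : ∀ a b : V, G.Adj a b → a ∈ M → b ∉ M → (patched T M pw).dist a b ≤ 3 := by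
    intro a b hab haM hbM
    have haK : dp T u v a = K := haM.1
    have hd1 : (patched T M pw).dist a b ≤ 1 + T.dist (pw a) b :=
      patched_dist_le_mem (G := G) hT hpend hpM hpwAdj haM hbM
    obtain ⟨cq1, cq2, cq3, cq4⟩ := chainq a haM.1
    obtain ⟨cg1, cg2, cg3, cg4⟩ := chaing a haM.1
    obtain ⟨ch1, ch2, ch3⟩ := chainh a haM.1
    have htri1 := hT.isConnected.dist_triangle (u := pr hT u (pr hT u (pr hT u a)))
      (v := pr hT u (pr hT u a)) (w := pr hT u a)
    have hcm1 : T.dist (pr hT u (pr hT u (pr hT u a))) (pr hT u (pr hT u a)) =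
        T.dist (pr hT u (pr hT u a)) (pr hT u (pr hT u (pr hT u a))) := SimpleGraph.dist_comm
    have hcm2 : T.dist (pr hT u (pr hT u a)) (pr hT u a) =
        T.dist (pr hT u a) (pr hT u (pr hT u a)) := SimpleGraph.dist_comm
    have hpwv : pw a = pr hT u (pr hT u a) ∨ pw a = pr hT u (pr hT u (pr hT u a)) := by
      rw [hpw]
      by_cases hAdj : G.Adj a (pr hT u (pr hT u a)) <;> simp [hAdj]
    have hself_g : T.dist (pr hT u (pr hT u a)) (pr hT u (pr hT u a)) = 0 := by simp
    have hself_h : T.dist (pr hT u (pr hT u (pr hT u a)))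
        (pr hT u (pr hT u (pr hT u a))) = 0 := by simp
    rcases ball hT he' hK hcov haM.1 hab.ne' (hTe a b hab) with hb | hb | hb | hb | hb
    · -- b = q
      subst hb
      rcases hpwv with h | h <;> rw [h] at hd1 <;> omega
    · -- b = g
      subst hb
      rcases hpwv with h | h <;> rw [h] at hd1 <;> omega
    · -- b = h
      subst hb
      rcases hpwv with h | h <;> rw [h] at hd1 <;> omega
    · -- pr b = pr a : b would be in M
      exfalso
      have hdpb : dp T u v b = K := by
        have := pr_back hT he' hb (by omega)
        omega
      have : pr hT u (pr hT u b) = pr hT u (pr hT u a) := by rw [hb]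
      exact hbM ⟨hdpb, by rw [this]; exact haM.2⟩
    · -- pr b = g
      have hdpb : dp T u v b = K - 1 := by
        have := pr_back hT he' hb (by omega)
        omega
      have hbad : T.Adj b (pr hT u b) ∧ T.dist b (pr hT u b) = 1 :=
        ⟨(step1 hT he' (z := b) (by omega)).1, (step1 hT he' (z := b) (by omega)).2.2.1⟩
      have hdbg : T.dist (pr hT u (pr hT u a)) b ≤ 1 := by
        have : T.dist b (pr hT u (pr hT u a)) = 1 := by rw [← hb]; exact hbad.2
        have hcm : T.dist (pr hT u (pr hT u a)) b = T.dist b (pr hT u (pr hT u a)) :=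
          SimpleGraph.dist_comm
        omega
      have htri2 := hT.isConnected.dist_triangle (u := pr hT u (pr hT u (pr hT u a)))
        (v := pr hT u (pr hT u a)) (w := b)
      rcases hpwv with h | h <;> rw [h] at hd1 <;> omega
  have hedge : ∀ a b : V, G.Adj a b → (patched T M pw).dist a b ≤ 3 := by
    intro a b hab
    by_cases haM : a ∈ M <;> by_cases hbM : b ∈ M
    · -- both moved
      have haK : dp T u v a = K := haM.1
      have hbK : dp T u v b = K := hbM.1
      have hd2 : (patched T M pw).dist a b ≤ 2 + T.dist (pw a) (pw b) :=
        patched_dist_le_mem₂ (G := G) hT hpend hpM hpwAdj haM hbM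
      have hsib := sibling hT he' hK hcov haM.1 hbM.1 hab.ne (hTe a b hab)
      have hsib2 : pr hT u (pr hT u a) = pr hT u (pr hT u b) := by rw [hsib]
      have hsib3 : pr hT u (pr hT u (pr hT u a)) = pr hT u (pr hT u (pr hT u b)) := by
        rw [hsib]
      obtain ⟨cg1, cg2, cg3, cg4⟩ := chaing a haM.1
      obtain ⟨ch1, ch2, ch3⟩ := chainh a haM.1
      have hcm1 : T.dist (pr hT u (pr hT u (pr hT u a))) (pr hT u (pr hT u a)) =
          T.dist (pr hT u (pr hT u a)) (pr hT u (pr hT u (pr hT u a))) :=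
        SimpleGraph.dist_comm
      have hpwa : pw a = pr hT u (pr hT u a) ∨ pw a = pr hT u (pr hT u (pr hT u a)) := by
        rw [hpw]
        by_cases hAdj : G.Adj a (pr hT u (pr hT u a)) <;> simp [hAdj]
      have hpwb : pw b = pr hT u (pr hT u a) ∨ pw b = pr hT u (pr hT u (pr hT u a)) := by
        rw [hsib2]
        rw [hpw]
        by_cases hAdj : G.Adj b (pr hT u (pr hT u b)) <;> simp [hAdj]
      have hself_g : T.dist (pr hT u (pr hT u a)) (pr hT u (pr hT u a)) = 0 := by simp
      have hself_h : T.dist (pr hT u (pr hT u (pr hT u a)))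
          (pr hT u (pr hT u (pr hT u a))) = 0 := by simp
      rcases hpwa with h1 | h1 <;> rcases hpwb with h2 | h2 <;> rw [h1, h2] at hd2 <;>
        omega
    · exact aux a b hab haM hbM
    · rw [SimpleGraph.dist_comm]
      exact aux b a hab.symm hbM haM
    · have := patched_dist_le (pnew := pw) hT hpend haM hbM
      have := hTe a b hab
      omega
  refine ⟨patched T M pw, hle, htree, spanner_of_edges hconn hG hedge, ?_⟩
  -- diameter bound
  have hA : ∀ z : V, ∃ s, (s = u ∨ s = v) ∧ (patched T M pw).dist z s ≤ K ∧
      (¬(dp T u v z = K ∧ pr hT u (pr hT u z) = g₀) →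
        (patched T M pw).dist z s ≤ K - 1) := by
    intro z
    by_cases hzM : z ∈ M
    · obtain ⟨s, hs, hds⟩ := anch (pw z)
      have hsM : s ∉ M := fun hmem => by
        have := hMdeep _ hmem; have := hsnotM s hs; omega
      have hd := patched_dist_le_mem (G := G) hT hpend hpM hpwAdj hzM hsM
      have := hpwdp z hzM
      exact ⟨s, hs, by omega, fun _ => by omega⟩
    · obtain ⟨s, hs, hds⟩ := anch z
      have hsM : s ∉ M := fun hmem => by
        have := hMdeep _ hmem; have := hsnotM s hs; omega
      have hd := patched_dist_le (pnew := pw) hT hpend hzM hsM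
      by_cases hzK : dp T u v z = K ∧ pr hT u (pr hT u z) = g₀
      · exact ⟨s, hs, by have := hcov z; omega, fun hcon => absurd hzK hcon⟩
      · have hzd : dp T u v z ≤ K - 1 := by
          rcases Nat.lt_or_ge (dp T u v z) K with h | h
          · omega
          · have hzKeq : dp T u v z = K := le_antisymm (hcov z) h
            exfalso
            by_cases hgz : pr hT u (pr hT u z) = g₀
            · exact hzK ⟨hzKeq, hgz⟩
            · exact hzM ⟨hzKeq, hgz⟩
        exact ⟨s, hs, by omega, fun _ => by omega⟩
  have hsdist : ∀ s s' : V, (s = u ∨ s = v) → (s' = u ∨ s' = v) →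
      (patched T M pw).dist s s' ≤ e := by
    intro s s' hs hs'
    have hsM : s ∉ M := fun hmem => by
      have := hMdeep _ hmem; have := hsnotM s hs; omega
    have hsM' : s' ∉ M := fun hmem => by
      have := hMdeep _ hmem; have := hsnotM s' hs'; omega
    have hd := patched_dist_le (pnew := pw) hT hpend hsM hsM'
    have hcm : T.dist v u = T.dist u v := SimpleGraph.dist_comm
    rcases hs with rfl | rfl <;> rcases hs' with rfl | rfl <;>
      simp [SimpleGraph.dist_self] at hd ⊢ <;> omega
  intro x y
  by_cases hxk : dp T u v x = K ∧ pr hT u (pr hT u x) = g₀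
  · by_cases hyk : dp T u v y = K ∧ pr hT u (pr hT u y) = g₀
    · -- both kept deep, close to g₀
      have hxM : x ∉ M := fun hmem => hmem.2 hxk.2
      have hyM : y ∉ M := fun hmem => hmem.2 hyk.2
      have hd := patched_dist_le (pnew := pw) hT hpend hxM hyM
      obtain ⟨xq1, _, xq3, _⟩ := chainq x hxk.1
      obtain ⟨_, _, xg3, _⟩ := chaing x hxk.1
      obtain ⟨yq1, _, yq3, _⟩ := chainq y hyk.1
      obtain ⟨_, _, yg3, _⟩ := chaing y hyk.1
      have t1 := hT.isConnected.dist_triangle (u := x) (v := pr hT u x)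
        (w := pr hT u (pr hT u x))
      have t2 := hT.isConnected.dist_triangle (u := y) (v := pr hT u y)
        (w := pr hT u (pr hT u y))
      have t3 := hT.isConnected.dist_triangle (u := x) (v := pr hT u (pr hT u x))
        (w := y)
      have hcm : T.dist (pr hT u (pr hT u y)) y = T.dist y (pr hT u (pr hT u y)) :=
        SimpleGraph.dist_comm
      rw [hxk.2, hyk.2] at *
      omega
    · obtain ⟨sx, hsx, hdx, _⟩ := hA x
      obtain ⟨sy, hsy, _, hdy⟩ := hA y
      have t1 := hconn.dist_triangle (u := x) (v := sx) (w := y)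
      have t2 := hconn.dist_triangle (u := sx) (v := sy) (w := y)
      have hss := hsdist sx sy hsx hsy
      have hcm : (patched T M pw).dist sy y = (patched T M pw).dist y sy :=
        SimpleGraph.dist_comm
      have := hdy hyk
      omega
  · obtain ⟨sx, hsx, _, hdx⟩ := hA x
    obtain ⟨sy, hsy, hdy, _⟩ := hA y
    have t1 := hconn.dist_triangle (u := x) (v := sx) (w := y)
    have t2 := hconn.dist_triangle (u := sx) (v := sy) (w := y)
    have hss := hsdist sx sy hsx hsy
    have hcm : (patched T M pw).dist sy y = (patched T M pw).dist y sy :=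
      SimpleGraph.dist_comm
    have := hdx hxk
    omega

lemma step {G T : SimpleGraph V} (hG : G.Connected)
    (hdiam : ∀ x y : V, G.dist x y ≤ 3) (hTG : T ≤ G) (hT : T.IsTree)
    (hsp : ∀ x y : V, T.dist x y ≤ 3 * G.dist x y)
    (u v : V) (e : ℕ) (he : (e = 0 ∧ u = v) ∨ (e = 1 ∧ T.Adj u v))
    (K : ℕ) (hK : 3 ≤ K)
    (hcov : ∀ z : V, min (T.dist z u) (T.dist z v) ≤ K) :
    ∃ T' : SimpleGraph V, T' ≤ G ∧ T'.IsTree ∧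
      (∀ x y : V, T'.dist x y ≤ 3 * G.dist x y) ∧
      (∀ x y : V, T'.dist x y ≤ 2 * K - 1 + e) := by
  classical
  have hcov' : ∀ z : V, dp T u v z ≤ K := fun z => hcov z
  have he' : u = v ∨ T.Adj u v := he.elim (fun h => Or.inl h.2) (fun h => Or.inr h.2)
  have hTe : ∀ a b : V, G.Adj a b → T.dist a b ≤ 3 := by
    intro a b hab
    have h1 := hsp a b
    rw [adj_dist_one hab] at h1
    omega
  by_cases hdeep : ∃ z, dp T u v z = K
  · obtain ⟨a₀, ha₀⟩ := hdeep
    by_cases hst : ∃ z, dp T u v z = K ∧ ¬ G.Adj z (pr hT u (pr hT u z)) ∧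
        ¬ G.Adj z (pr hT u (pr hT u (pr hT u z)))
    · obtain ⟨x₀, hx₀K, hx₀g, hx₀h⟩ := hst
      refine step_core hG hdiam hTG hT hsp u v e he K hK hcov'
        (pr hT u (pr hT u x₀)) ?_ ?_
      · obtain ⟨_, _, _, h4⟩ := step1 hT he' (z := x₀) (by rw [hx₀K]; omega)
        obtain ⟨_, _, _, h4'⟩ := step1 hT he' (z := pr hT u x₀) (by omega)
        omega
      · intro z hz hne
        by_cases hzg : G.Adj z (pr hT u (pr hT u z))
        · exact Or.inl hzg
        by_cases hzh : G.Adj z (pr hT u (pr hT u (pr hT u z)))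
        · exact Or.inr hzh
        exact absurd (conf hG hdiam hT he' hK hcov' hTe hx₀K hx₀g hx₀h hz hzg hzh
          (Ne.symm hne)) (by simp)
    · push_neg at hst
      refine step_core hG hdiam hTG hT hsp u v e he K hK hcov'
        (pr hT u (pr hT u a₀)) ?_ ?_
      · obtain ⟨_, _, _, h4⟩ := step1 hT he' (z := a₀) (by rw [ha₀]; omega)
        obtain ⟨_, _, _, h4'⟩ := step1 hT he' (z := pr hT u a₀) (by omega)
        omega
      · intro z hz _
        by_cases hzg : G.Adj z (pr hT u (pr hT u z))
        · exact Or.inl hzg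
        · exact Or.inr (hst z hz hzg)
  · -- no deep vertices at all : T itself works
    push_neg at hdeep
    refine ⟨T, hTG, hT, hsp, ?_⟩
    have hduv : T.dist u v ≤ e := by
      rcases he with ⟨rfl, rfl⟩ | ⟨rfl, hadj⟩
      · simp [SimpleGraph.dist_self]
      · rw [adj_dist_one hadj]
    have anch : ∀ z : V, ∃ s, (s = u ∨ s = v) ∧ T.dist z s = dp T u v z := by
      intro z
      rcases le_total (T.dist z u) (T.dist z v) with h | h
      · exact ⟨u, Or.inl rfl, by unfold dp; omega⟩
      · exact ⟨v, Or.inr rfl, by unfold dp; omega⟩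
    intro x y
    obtain ⟨sx, hsx, hdx⟩ := anch x
    obtain ⟨sy, hsy, hdy⟩ := anch y
    have hx := lt_of_le_of_ne (hcov' x) (hdeep x)
    have hy := lt_of_le_of_ne (hcov' y) (hdeep y)
    have t1 := hT.isConnected.dist_triangle (u := x) (v := sx) (w := y)
    have t2 := hT.isConnected.dist_triangle (u := sx) (v := sy) (w := y)
    have hss : T.dist sx sy ≤ e := by
      have hcm : T.dist v u = T.dist u v := SimpleGraph.dist_comm
      rcases hsx with rfl | rfl <;> rcases hsy with rfl | rfl <;>
        simp [SimpleGraph.dist_self] <;> omega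
    have hcmy : T.dist sy y = T.dist y sy := SimpleGraph.dist_comm
    omega

/-! ## Centers -/

lemma vertex_center (hT : T.IsTree) {a b : V} {K : ℕ} (hab : T.dist a b = 2 * K)
    (hmx : ∀ z : V, T.dist a z ≤ 2 * K ∧ T.dist z b ≤ 2 * K) :
    ∃ c : V, ∀ z : V, T.dist z c ≤ K := by
  refine ⟨(tpath hT a b).getVert K, fun z => ?_⟩
  set c := (tpath hT a b).getVert K with hc
  obtain ⟨e1, e2⟩ := dist_getVert_eq hT (x := a) (y := b) (i := K) (by omega)
  rw [← hc] at e1 e2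
  rw [hab] at e2
  have honp : onp T c a b := by unfold onp; omega
  have hcz : T.dist z c = T.dist c z := SimpleGraph.dist_comm
  rcases onp_cover hT honp z with h1 | h1
  · have := (hmx z).1
    unfold onp at h1
    omega
  · have := (hmx z).2
    unfold onp at h1
    omega

lemma edge_center (hT : T.IsTree) {a b : V} {K : ℕ} (hab : T.dist a b = 2 * K + 1)
    (hmx : ∀ z : V, T.dist a z ≤ 2 * K + 1 ∧ T.dist z b ≤ 2 * K + 1) :
    ∃ u v : V, T.Adj u v ∧ ∀ z : V, min (T.dist z u) (T.dist z v) ≤ K := by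
  have hlen : (tpath hT a b).length = 2 * K + 1 := by rw [tpath_length, hab]
  refine ⟨(tpath hT a b).getVert K, (tpath hT a b).getVert (K + 1),
    (tpath hT a b).adj_getVert_succ (by omega), fun z => ?_⟩
  set u := (tpath hT a b).getVert K with hu
  set v := (tpath hT a b).getVert (K + 1) with hv
  have hadj : T.Adj u v := (tpath hT a b).adj_getVert_succ (by omega)
  obtain ⟨eu1, eu2⟩ := dist_getVert_eq hT (x := a) (y := b) (i := K) (by omega)
  obtain ⟨ev1, ev2⟩ := dist_getVert_eq hT (x := a) (y := b) (i := K + 1) (by omega)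
  rw [← hu] at eu1 eu2
  rw [← hv] at ev1 ev2
  rw [hab] at eu2 ev2
  have honpu : onp T u a b := by unfold onp; omega
  have honpv : onp T v a b := by unfold onp; omega
  have czu : T.dist z u = T.dist u z := SimpleGraph.dist_comm
  have czv : T.dist z v = T.dist v z := SimpleGraph.dist_comm
  have hza := (hmx z).1
  have hzb := (hmx z).2
  rcases onp_cover hT honpu z with h1 | h1
  · rcases onp_cover hT honpv z with h2 | h2
    · unfold onp at h2; omega
    · -- onp u a z and onp v z b
      unfold onp at h1 h2
      rcases onp_dichot hT hadj z with h3 | h3 <;> omega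
  · unfold onp at h1; omega

/-! ## Driver -/

lemma improve {G T : SimpleGraph V} (hG : G.Connected)
    (hdiam : ∀ x y : V, G.dist x y ≤ 3) (hTG : T ≤ G) (hT : T.IsTree)
    (hsp : ∀ x y : V, T.dist x y ≤ 3 * G.dist x y)
    (D : ℕ) (hD : 6 ≤ D) (hbd : ∀ x y : V, T.dist x y ≤ D) :
    ∃ T' : SimpleGraph V, T' ≤ G ∧ T'.IsTree ∧
      (∀ x y : V, T'.dist x y ≤ 3 * G.dist x y) ∧
      (∀ x y : V, T'.dist x y ≤ D - 1) := by
  classical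
  by_cases hex : ∀ x y : V, T.dist x y ≤ D - 1
  · exact ⟨T, hTG, hT, hsp, hex⟩
  push_neg at hex
  obtain ⟨a, b, hab⟩ := hex
  have habD : T.dist a b = D := le_antisymm (hbd a b) (by omega)
  have hmx : ∀ z : V, T.dist a z ≤ D ∧ T.dist z b ≤ D := fun z => ⟨hbd a z, hbd z b⟩
  rcases Nat.even_or_odd D with ⟨K, hDK⟩ | ⟨K, hDK⟩
  · -- D = 2K, vertex center
    have hK : 3 ≤ K := by omega
    obtain ⟨c, hc⟩ := vertex_center hT (a := a) (b := b) (K := K) (by omega) (by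
      intro z; constructor
      · exact le_trans (hmx z).1 (by omega)
      · exact le_trans (hmx z).2 (by omega))
    obtain ⟨T', h1, h2, h3, h4⟩ := step hG hdiam hTG hT hsp c c 0 (Or.inl ⟨rfl, rfl⟩)
      K hK (fun z => by simpa using hc z)
    exact ⟨T', h1, h2, h3, fun x y => le_trans (h4 x y) (by omega)⟩
  · -- D = 2K + 1, edge center
    have hK : 3 ≤ K := by omega
    obtain ⟨u, v, huv, hc⟩ := edge_center hT (a := a) (b := b) (K := K) (by omega) (by
      intro z; constructor
      · exact le_trans (hmx z).1 (by omega)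
      · exact le_trans (hmx z).2 (by omega))
    obtain ⟨T', h1, h2, h3, h4⟩ := step hG hdiam hTG hT hsp u v 1 (Or.inr ⟨rfl, huv⟩)
      K hK hc
    exact ⟨T', h1, h2, h3, fun x y => le_trans (h4 x y) (by omega)⟩

end TreeSpannerAux

/-- A graph of diameter at most 3 that admits a tree 3-spanner admits a tree 3-spanner
of diameter at most 5. -/
theorem stmt_10 {V : Type*} [Fintype V] (G : SimpleGraph V)
    (hG : G.Connected) (hdiam : ∀ x y : V, G.dist x y ≤ 3)
    (h : ∃ T : SimpleGraph V, T ≤ G ∧ T.IsTree ∧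
      ∀ x y : V, T.dist x y ≤ 3 * G.dist x y) :
    ∃ T : SimpleGraph V, T ≤ G ∧ T.IsTree ∧
      (∀ x y : V, T.dist x y ≤ 3 * G.dist x y) ∧
      (∀ x y : V, T.dist x y ≤ 5) := by
  classical
  obtain ⟨T, hTG, hT, hsp⟩ := h
  have h9 : ∀ x y : V, T.dist x y ≤ 9 := fun x y =>
    le_trans (hsp x y) (by have := hdiam x y; omega)
  obtain ⟨T8, hTG8, hT8, hsp8, hb8⟩ :=
    TreeSpannerAux.improve hG hdiam hTG hT hsp 9 (by omega) h9
  obtain ⟨T7, hTG7, hT7, hsp7, hb7⟩ :=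
    TreeSpannerAux.improve hG hdiam hTG8 hT8 hsp8 8 (by omega)
      (fun x y => le_trans (hb8 x y) (by omega))
  obtain ⟨T6, hTG6, hT6, hsp6, hb6⟩ :=
    TreeSpannerAux.improve hG hdiam hTG7 hT7 hsp7 7 (by omega)
      (fun x y => le_trans (hb7 x y) (by omega))
  obtain ⟨T5, hTG5, hT5, hsp5, hb5⟩ :=
    TreeSpannerAux.improve hG hdiam hTG6 hT6 hsp6 6 (by omega)
      (fun x y => le_trans (hb6 x y) (by omega))
  exact ⟨T5, hTG5, hT5, hsp5, fun x y => le_trans (hb5 x y) (by omega)⟩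
end

section
/- Let T be a tree 3-spanner of a finite simple graph G, let D be a path in T realizing the diameter of T with diameter at least 6, let a be the second vertex of D, u the next vertex along D after a, and let x be a leaf of T adjacent in T to a. If x is adjacent in G to u, then the tree T' = (T \ {xa}) ∪ {xu} is also a tree 3-spanner of G. -/
open SimpleGraph Walk

/-- In a tree, any path between two vertices has length equal to the distance. -/
private lemma aux_plen {V : Type*} {T : SimpleGraph V} (hT : T.IsTree) {v w : V}
    (p : T.Walk v w) (hp : p.IsPath) : p.length = T.dist v w := by
  obtain ⟨q, hq, hql⟩ := hT.isConnected.exists_path_of_dist v w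
  have h := hT.IsAcyclic.path_unique ⟨p, hp⟩ ⟨q, hq⟩
  rw [← hql]
  exact congrArg Walk.length (congrArg Subtype.val h)

/-- A leaf `x` (all of whose neighbors equal `a`) is not on any path between two
non-`x` vertices. -/
private lemma aux_avoid {V : Type*} {T : SimpleGraph V} {x a : V}
    (hleaf : ∀ y : V, T.Adj x y → y = a) :
    ∀ {v w : V} (p : T.Walk v w), p.IsPath → v ≠ x → w ≠ x → x ∉ p.support := by
  intro v w p
  induction p with
  | nil => intro _ hv _; simp [Ne.symm hv]
  | @cons v' b w' h p ih =>
    intro hp hv hw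
    rw [Walk.cons_isPath_iff] at hp
    rw [Walk.support_cons, List.mem_cons]
    push_neg
    refine ⟨Ne.symm hv, ?_⟩
    by_cases hb : b = x
    · subst hb
      exfalso
      obtain ⟨y, hxy, q, rfl⟩ := Walk.exists_eq_cons_of_ne (Ne.symm hw) p
      have hy : y = a := hleaf y hxy
      have hv' : v' = a := hleaf v' h.symm
      apply hp.2
      rw [Walk.support_cons]
      rw [hv', ← hy]
      exact List.mem_cons_of_mem _ q.start_mem_support
    · exact ih hp.1 hb hw

/-- On a path, the starting vertex only occurs at index 0. -/
private lemma aux_start_index {V : Type*} {T : SimpleGraph V} {v w : V} (p : T.Walk v w)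
    (hp : p.IsPath) : ∀ i, i ≤ p.length → p.getVert i = v → i = 0 := by
  intro i hi hgv
  cases i with
  | zero => rfl
  | succ j =>
    cases p with
    | nil => simp at hi
    | cons h q =>
      rw [Walk.cons_isPath_iff] at hp
      exact absurd (Walk.mem_support_iff_exists_getVert.mpr
        ⟨j, by simpa using hgv, by simpa using hi⟩) hp.2

/-- Moving a leaf `x` of `T` hanging at the second vertex `a` of a diametral path of length
at least 6 so that it hangs at the next vertex `u` instead (given `x` is `G`-adjacent to `u`)
preserves the tree 3-spanner property. -/
theorem stmt_11 {V : Type*} [Fintype V] (G T : SimpleGraph V)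
    (hle : T ≤ G) (hT : T.IsTree)
    (hspan : ∀ p q : V, T.dist p q ≤ 3 * G.dist p q)
    (s t : V) (P : T.Walk s t) (hP : P.IsPath)
    (hdiam : ∀ x y : V, T.dist x y ≤ P.length) (hlen : P.length = T.dist s t)
    (h6 : 6 ≤ P.length)
    (a u x : V) (ha : P.getVert 1 = a) (hu : P.getVert 2 = u)
    (hax : T.Adj a x) (hleaf : ∀ y : V, T.Adj x y → y = a)
    (hxu : G.Adj x u)
    (T' : SimpleGraph V)
    (hT' : T' = T.deleteEdges {s(x, a)} ⊔ SimpleGraph.fromEdgeSet {s(x, u)}) :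
    T' ≤ G ∧ T'.IsTree ∧ ∀ p q : V, T'.dist p q ≤ 3 * G.dist p q := by
  classical
  have hconn := hT.isConnected
  have hac := hT.IsAcyclic
  have hGconn : G.Connected := hconn.mono hle
  -- Destructure P into its first edge and the rest Q.
  have hPnil : ¬ P.Nil := by rw [Walk.not_nil_iff_lt_length]; omega
  obtain ⟨a', hsa, Q, rfl⟩ := Walk.not_nil_iff.mp hPnil
  rw [show (1 : ℕ) = 0 + 1 from rfl, Walk.getVert_cons_succ, Walk.getVert_zero] at ha
  have ha2 := ha.symm
  subst ha2
  rw [Walk.cons_isPath_iff] at hP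
  obtain ⟨hQp, hsQ⟩ := hP
  have hQ1 : Q.getVert 1 = u := by simpa using hu
  have hQlen : 5 ≤ Q.length := by
    simp only [Walk.length_cons] at h6; omega
  have hQd : ∀ p q : V, T.dist p q ≤ Q.length + 1 := by
    intro p q
    have := hdiam p q
    simpa [Walk.length_cons] using this
  have hau : T.Adj a u := by
    have h := Q.adj_getVert_succ (i := 0) (by omega)
    rwa [Walk.getVert_zero, show (0 : ℕ) + 1 = 1 from rfl, hQ1] at h
  have hxa : x ≠ a := hax.ne'
  have hanu : a ≠ u := hau.ne
  -- any T-neighbor of `a` lying on Q is the second vertex `u`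
  have hsecond : ∀ b, b ∈ Q.support → T.Adj a b → b = u := by
    intro b hb hab
    have hK : (Q.takeUntil b hb).IsPath := hQp.takeUntil hb
    have hun := hac.path_unique ⟨Q.takeUntil b hb, hK⟩ (SimpleGraph.Path.singleton hab)
    have hval : Q.takeUntil b hb = Walk.cons hab Walk.nil := by
      simpa [SimpleGraph.Path.singleton] using congrArg Subtype.val hun
    have hspec := Q.take_spec hb
    rw [hval] at hspec
    have h1 := hQ1
    rw [← hspec] at h1
    simpa using h1
  have hxu' : x ≠ u := by
    rintro rfl
    have h2 := Q.adj_getVert_succ (i := 1) (by omega)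
    rw [hQ1] at h2
    have h2a : Q.getVert (1 + 1) = a := hleaf _ h2
    have := aux_start_index Q hQp 2 (by omega) (by simpa using h2a)
    omega
  -- key structural lemma: every T-neighbor of `a` other than `u` is a leaf
  have L1 : ∀ b c : V, T.Adj a b → b ≠ u → T.Adj b c → c = a := by
    intro b c hab hbu hbc
    by_contra hca
    have hbQ : b ∉ Q.support := fun hb => hbu (hsecond b hb hab)
    have hcQ : c ∉ Q.support := by
      intro hc
      have hpath2 : (Walk.cons hab (Walk.cons hbc Walk.nil)).IsPath := by
        rw [Walk.cons_isPath_iff, Walk.cons_isPath_iff]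
        refine ⟨⟨Walk.IsPath.nil, by simp [hbc.ne]⟩, ?_⟩
        simp only [Walk.support_cons, Walk.support_nil, List.mem_cons]
        push_neg
        exact ⟨hab.ne, fun h => hca h.symm, by simp⟩
      have hK : (Q.takeUntil c hc).IsPath := hQp.takeUntil hc
      have hun := hac.path_unique ⟨Q.takeUntil c hc, hK⟩ ⟨_, hpath2⟩
      have hval : Q.takeUntil c hc = Walk.cons hab (Walk.cons hbc Walk.nil) :=
        congrArg Subtype.val hun
      have hspec := Q.take_spec hc
      rw [hval] at hspec
      have h1 := hQ1
      rw [← hspec] at h1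
      simp at h1
      exact hbu h1
    have hC1 : (Walk.cons hbc.symm (Walk.cons hab.symm Q)).IsPath := by
      rw [Walk.cons_isPath_iff, Walk.cons_isPath_iff]
      refine ⟨⟨hQp, hbQ⟩, ?_⟩
      simp only [Walk.support_cons, List.mem_cons]
      push_neg
      exact ⟨hbc.ne', hcQ⟩
    have hlc := aux_plen hT _ hC1
    have hct := hQd c t
    simp only [Walk.length_cons] at hlc
    omega
  -- every G-neighbor of x is within T-distance 2 of u
  have L2 : ∀ w : V, G.Adj x w → T.dist u w ≤ 2 := by
    intro w hxw
    have hwx : w ≠ x := hxw.ne'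
    have hG1 : G.dist x w = 1 := SimpleGraph.dist_eq_one_iff_adj.mpr hxw
    have h3 : T.dist x w ≤ 3 := by
      have := hspan x w
      rw [hG1] at this
      omega
    have haw : T.dist a w ≤ 2 := by
      obtain ⟨p, hp, hpl⟩ := hconn.exists_path_of_dist x w
      obtain ⟨y, hxy, q, rfl⟩ := Walk.exists_eq_cons_of_ne (Ne.symm hwx) p
      have hy : y = a := hleaf y hxy
      subst hy
      have hq := SimpleGraph.dist_le q
      simp only [Walk.length_cons] at hpl
      omega
    have hua : T.dist u a = 1 := SimpleGraph.dist_eq_one_iff_adj.mpr hau.symm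
    have htri := hconn.dist_triangle (u := u) (v := a) (w := w)
    rcases (show T.dist a w = 0 ∨ T.dist a w = 1 ∨ T.dist a w = 2 by omega) with h0 | h1 | h2
    · have hwa : a = w := (hconn.dist_eq_zero_iff).mp h0
      rw [← hwa]
      omega
    · omega
    · obtain ⟨r, hr, hrl⟩ := hconn.exists_path_of_dist a w
      rw [h2] at hrl
      have hraw : a ≠ w := by
        rintro rfl
        rw [SimpleGraph.dist_self] at h2
        omega
      obtain ⟨m, ham, r1, rfl⟩ := Walk.exists_eq_cons_of_ne hraw r
      have hr1 : r1.length = 1 := by simpa using hrl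
      have hadj_mw : T.Adj m w := by
        have h := r1.adj_getVert_succ (i := 0) (by omega)
        have hend : r1.getVert 1 = w := by rw [← hr1]; exact r1.getVert_length
        rwa [Walk.getVert_zero, show (0 : ℕ) + 1 = 1 from rfl, hend] at h
      by_cases hmu : m = u
      · subst hmu
        have := SimpleGraph.dist_eq_one_iff_adj.mpr hadj_mw
        omega
      · have hwa := L1 m w ham hmu hadj_mw
        rw [hwa, SimpleGraph.dist_self] at h2
        omega
  -- basic facts about T'
  have hT'xu : T'.Adj x u := by
    rw [hT', SimpleGraph.sup_adj, SimpleGraph.fromEdgeSet_adj]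
    exact Or.inr ⟨rfl, hxu'⟩
  have hT'nbr : ∀ z, T'.Adj x z → z = u := by
    intro z hz
    rw [hT', SimpleGraph.sup_adj, SimpleGraph.deleteEdges_adj,
      SimpleGraph.fromEdgeSet_adj] at hz
    rcases hz with ⟨hzT, hne⟩ | ⟨hmem, hne⟩
    · exfalso
      apply hne
      rw [hleaf z hzT]
      rfl
    · rw [Set.mem_singleton_iff] at hmem
      rcases Sym2.eq_iff.mp hmem with ⟨_, h2⟩ | ⟨h1, _⟩
      · exact h2
      · exact absurd h1 hxu'
  have hedgeT' : ∀ e, e ∈ T.edgeSet → e ≠ s(x, a) → e ∈ T'.edgeSet := by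
    intro e he hne
    rw [hT', SimpleGraph.edgeSet_sup]
    left
    rw [SimpleGraph.edgeSet_deleteEdges]
    exact ⟨he, by simpa using hne⟩
  have hmove : ∀ v w : V, v ≠ x → w ≠ x → ∃ q : T'.Walk v w, q.length = T.dist v w := by
    intro v w hv hw
    obtain ⟨p, hp, hpl⟩ := hconn.exists_path_of_dist v w
    have hxp : x ∉ p.support := aux_avoid hleaf p hp hv hw
    have hpe : ∀ e ∈ p.edges, e ∈ T'.edgeSet := by
      intro e he
      refine hedgeT' e (p.edges_subset_edgeSet he) ?_
      rintro rfl
      exact hxp (p.fst_mem_support_of_mem_edges he)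
    exact ⟨p.transfer T' hpe, by rw [Walk.length_transfer]; exact hpl⟩
  have hT'le : T' ≤ G := by
    rw [hT']
    intro v w hvw
    rw [SimpleGraph.sup_adj, SimpleGraph.deleteEdges_adj, SimpleGraph.fromEdgeSet_adj] at hvw
    rcases hvw with ⟨h, _⟩ | ⟨h, hne⟩
    · exact hle h
    · rw [Set.mem_singleton_iff] at h
      rcases Sym2.eq_iff.mp h with ⟨h1, h2⟩ | ⟨h1, h2⟩
      · rw [h1, h2]; exact hxu
      · rw [h1, h2]; exact hxu.symm
  have hT'adj_ua : T'.Adj u a := by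
    rw [hT', SimpleGraph.sup_adj, SimpleGraph.deleteEdges_adj]
    left
    refine ⟨hau.symm, ?_⟩
    rw [Set.mem_singleton_iff]
    intro h
    rcases Sym2.eq_iff.mp h with ⟨h1, _⟩ | ⟨_, h2⟩
    · exact hxu' h1.symm
    · exact hxa h2.symm
  have hT'conn : T'.Connected := by
    rw [connected_iff_exists_forall_reachable]
    refine ⟨a, fun w => ?_⟩
    by_cases hw : w = x
    · have hw2 := hw.symm
      subst hw2
      exact hT'adj_ua.symm.reachable.trans hT'xu.symm.reachable
    · obtain ⟨q, _⟩ := hmove a w hax.ne hw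
      exact ⟨q⟩
  have hT'ac : T'.IsAcyclic := by
    intro v c hc
    by_cases hx : x ∈ c.support
    · have hc' := hc.rotate hx
      have hlen3 := hc'.three_le_length
      have hdnil : ¬ (c.rotate x hx).Nil := hc'.not_nil
      obtain ⟨y1, h1, d1, hde⟩ := Walk.not_nil_iff.mp hdnil
      have hy1 : u = y1 := (hT'nbr y1 h1).symm
      subst hy1
      have hdlen : (c.rotate x hx).length = d1.length + 1 := by
        rw [hde]; simp
      have hd1rnil : ¬ d1.reverse.Nil := by
        rw [Walk.not_nil_iff_lt_length, Walk.length_reverse]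
        omega
      obtain ⟨y2, h2, d2, hre⟩ := Walk.not_nil_iff.mp hd1rnil
      have hy2 : u = y2 := (hT'nbr y2 h2).symm
      subst hy2
      have hd2nil : ¬ d2.Nil := by
        rw [Walk.not_nil_iff_lt_length]
        have e1 : d1.reverse.length = d2.length + 1 := by rw [hre]; simp
        have e2 : d1.reverse.length = d1.length := Walk.length_reverse _
        omega
      obtain ⟨y3, h3, d3, h3e⟩ := Walk.not_nil_iff.mp hd2nil
      have hnd := hc'.support_nodup
      rw [hde, Walk.support_cons, List.tail_cons] at hnd
      have hs1 : d1.support = d2.support.reverse ++ [x] := by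
        have h4 : d1.support.reverse = x :: d2.support := by
          rw [← Walk.support_reverse, hre, Walk.support_cons]
        calc d1.support = d1.support.reverse.reverse := (List.reverse_reverse _).symm
          _ = (x :: d2.support).reverse := by rw [h4]
          _ = d2.support.reverse ++ [x] := by simp
      rw [hs1] at hnd
      have hnd2 : d2.support.Nodup := List.nodup_reverse.mp hnd.of_append_left
      rw [h3e, Walk.support_cons] at hnd2
      exact (List.nodup_cons.mp hnd2).1 d3.end_mem_support
    · have hpe : ∀ e ∈ c.edges, e ∈ T.edgeSet := by
        intro e he
        have heT' : e ∈ T'.edgeSet := c.edges_subset_edgeSet he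
        rw [hT', SimpleGraph.edgeSet_sup] at heT'
        rcases heT' with h | h
        · rw [SimpleGraph.edgeSet_deleteEdges] at h
          exact h.1
        · exfalso
          rw [SimpleGraph.edgeSet_fromEdgeSet] at h
          have he' : e = s(x, u) := h.1
          apply hx
          exact c.fst_mem_support_of_mem_edges (he' ▸ he)
      exact hac _ (hc.transfer hpe)
  refine ⟨hT'le, ⟨hT'conn, hT'ac⟩, ?_⟩
  have hT'dle : ∀ v w : V, v ≠ x → w ≠ x → T'.dist v w ≤ T.dist v w := by
    intro v w hv hw
    obtain ⟨q, hq⟩ := hmove v w hv hw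
    calc T'.dist v w ≤ q.length := SimpleGraph.dist_le q
      _ = T.dist v w := hq
  have hkey : ∀ w : V, w ≠ x → T'.dist x w ≤ 3 * G.dist x w := by
    intro w hw
    have hd1 : T'.dist x u = 1 := SimpleGraph.dist_eq_one_iff_adj.mpr hT'xu
    have htri := hT'conn.dist_triangle (u := x) (v := u) (w := w)
    have huw : T'.dist u w ≤ T.dist u w := hT'dle u w (Ne.symm hxu') hw
    obtain ⟨W, hWp, hWl⟩ := hGconn.exists_path_of_dist x w
    obtain ⟨y, hxy, W1, rfl⟩ := Walk.exists_eq_cons_of_ne (Ne.symm hw) W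
    have hW1 : W1.length + 1 = G.dist x w := by simpa using hWl
    have hyq : G.dist y w ≤ W1.length := SimpleGraph.dist_le W1
    have h2' : T.dist u y ≤ 2 := L2 y hxy
    have h3' : T.dist y w ≤ 3 * G.dist y w := hspan y w
    have htr2 := hconn.dist_triangle (u := u) (v := y) (w := w)
    omega
  intro p q
  by_cases hp : p = x
  · have hp2 := hp.symm
    subst hp2
    by_cases hq : q = x
    · have hq2 := hq.symm
      subst hq2
      simp [SimpleGraph.dist_self]
    · exact hkey q hq
  · by_cases hq : q = x
    · have hq2 := hq.symm
      subst hq2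
      have h := hkey p hp
      rwa [SimpleGraph.dist_comm (u := x) (v := p), SimpleGraph.dist_comm (u := x) (v := p)] at h
    · calc T'.dist p q ≤ T.dist p q := hT'dle p q hp hq
        _ ≤ 3 * G.dist p q := hspan p q
end
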